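/- arXiv:2603.29720 — 2 statements merged into one kernel-verified Lean document; each statement's English description precedes it below -/
import Mathlib

section
/- Let (X,T) be a topological dynamical system. For every T-invariant Borel probability measure μ on X, h̃_μ(T) ≥ h_μ(T), i.e. the supremum of h̃_μ(T,Φ) over continuous partitions of unity Φ is at least the Kolmogorov–Sinai entropy of (T,μ). -/
open MeasureTheory Filter Set

/-! ### Partitions of unity -/

/-- A finite partition of unity on `X`: a finite family of functions `X → [0,1]`
summing to `1` everywhere. -/
structure PartUnity (X : Type*) where
  n : ℕ
  f : Fin n → X → ℝ
  nonneg : ∀ i x, 0 ≤ f i x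
  le_one : ∀ i x, f i x ≤ 1
  sum_one : ∀ x, ∑ i, f i x = 1

namespace PartUnity

variable {X Y : Type*}

/-- A continuous partition of unity. -/
def Cont [TopologicalSpace X] (Φ : PartUnity X) : Prop := ∀ i, Continuous (Φ.f i)

/-- A measurable partition of unity. -/
def Meas [MeasurableSpace X] (Φ : PartUnity X) : Prop := ∀ i, Measurable (Φ.f i)

/-- A positive partition of unity. -/
def Pos (Φ : PartUnity X) : Prop := ∀ i x, 0 < Φ.f i x

/-- The join `Φ ∨ Ψ = {φ·ψ : φ ∈ Φ, ψ ∈ Ψ}` of two partitions of unity. -/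
def join (Φ Ψ : PartUnity X) : PartUnity X where
  n := Φ.n * Ψ.n
  f k x := Φ.f (finProdFinEquiv.symm k).1 x * Ψ.f (finProdFinEquiv.symm k).2 x
  nonneg k x := mul_nonneg (Φ.nonneg _ x) (Ψ.nonneg _ x)
  le_one k x := mul_le_one₀ (Φ.le_one _ x) (Ψ.nonneg _ x) (Ψ.le_one _ x)
  sum_one x := by
    rw [← Equiv.sum_comp (finProdFinEquiv : Fin Φ.n × Fin Ψ.n ≃ Fin (Φ.n * Ψ.n))
      (fun k => Φ.f (finProdFinEquiv.symm k).1 x * Ψ.f (finProdFinEquiv.symm k).2 x)]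
    simp only [Equiv.symm_apply_apply]
    rw [Fintype.sum_prod_type]
    dsimp only
    rw [← Finset.sum_mul_sum, Φ.sum_one x, Ψ.sum_one x, one_mul]

/-- Pull back a partition of unity by a map: `TΦ = {φ ∘ T : φ ∈ Φ}`. -/
def comp (Φ : PartUnity X) (T : Y → X) : PartUnity Y where
  n := Φ.n
  f i y := Φ.f i (T y)
  nonneg i y := Φ.nonneg i (T y)
  le_one i y := Φ.le_one i (T y)
  sum_one y := Φ.sum_one (T y)

/-- The trivial partition of unity `{1}`. -/
def triv (X : Type*) : PartUnity X where
  n := 1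
  f _ _ := 1
  nonneg _ _ := zero_le_one
  le_one _ _ := le_rfl
  sum_one _ := by simp

/-- `dyn T Φ n` is the dynamical join `Φ₀ⁿ⁻¹ = ⋁_{i=0}^{n-1} TⁱΦ`
(joined with a harmless trivial factor). -/
def dyn (T : X → X) (Φ : PartUnity X) : ℕ → PartUnity X
  | 0 => triv X
  | n + 1 => Φ.join ((dyn T Φ n).comp T)

/-- The product partition of unity `Φ ⊗ Ψ` on `X × Y`. -/
def prod (Φ : PartUnity X) (Ψ : PartUnity Y) : PartUnity (X × Y) where
  n := Φ.n * Ψ.n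
  f k p := Φ.f (finProdFinEquiv.symm k).1 p.1 * Ψ.f (finProdFinEquiv.symm k).2 p.2
  nonneg k p := mul_nonneg (Φ.nonneg _ _) (Ψ.nonneg _ _)
  le_one k p := mul_le_one₀ (Φ.le_one _ _) (Ψ.nonneg _ _) (Ψ.le_one _ _)
  sum_one p := by
    rw [← Equiv.sum_comp (finProdFinEquiv : Fin Φ.n × Fin Ψ.n ≃ Fin (Φ.n * Ψ.n))
      (fun k => Φ.f (finProdFinEquiv.symm k).1 p.1 * Ψ.f (finProdFinEquiv.symm k).2 p.2)]
    simp only [Equiv.symm_apply_apply]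
    rw [Fintype.sum_prod_type]
    dsimp only
    rw [← Finset.sum_mul_sum, Φ.sum_one p.1, Ψ.sum_one p.2, one_mul]

/-- The diameter of a partition of unity: the maximum of the diameters of the
supports of its members. -/
noncomputable def diam [PseudoMetricSpace X] (Φ : PartUnity X) : ℝ :=
  ⨆ i, Metric.diam (tsupport (Φ.f i))

end PartUnity

/-! ### Metric entropy via partitions of unity -/

variable {X Y : Type*}

/-- The static entropy `H̃_μ(Φ) = Σ_φ ( −μ(φ) log μ(φ) + μ(φ log φ) )`. -/
noncomputable def statEnt [MeasurableSpace X] (μ : Measure X) (Φ : PartUnity X) : ℝ :=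
  ∑ i, (-((∫ x, Φ.f i x ∂μ) * Real.log (∫ x, Φ.f i x ∂μ)) +
    ∫ x, Φ.f i x * Real.log (Φ.f i x) ∂μ)

/-- The conditional measure `μ_ψ`, determined by `μ_ψ(φ) = μ(φψ)/μ(ψ)`. -/
noncomputable def condMeas [MeasurableSpace X] (μ : Measure X) (ψ : X → ℝ) : Measure X :=
  (ENNReal.ofReal (∫ x, ψ x ∂μ))⁻¹ • μ.withDensity (fun x => ENNReal.ofReal (ψ x))

/-- The conditional static entropy `H̃_μ(Φ | Ψ) = Σ_ψ μ(ψ) H̃_{μ_ψ}(Φ)`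
(terms with `μ(ψ) = 0` vanish since they are multiplied by `μ(ψ) = 0`). -/
noncomputable def condStatEnt [MeasurableSpace X] (μ : Measure X) (Φ Ψ : PartUnity X) : ℝ :=
  ∑ j, (∫ x, Ψ.f j x ∂μ) * statEnt (condMeas μ (Ψ.f j)) Φ

/-- The local metric entropy `h̃_μ(T,Φ) = lim_n H̃_μ(Φ₀ⁿ⁻¹)/n`. -/
noncomputable def locEnt [MeasurableSpace X] (T : X → X) (μ : Measure X) (Φ : PartUnity X) : ℝ :=
  Filter.atTop.limsup fun n : ℕ => statEnt μ (PartUnity.dyn T Φ n) / (n : ℝ)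

/-- The local conditional metric entropy `h̃_μ(T,Φ|Ψ) = lim_n H̃_μ(Φ₀ⁿ⁻¹|Ψ₀ⁿ⁻¹)/n`. -/
noncomputable def condLocEnt [MeasurableSpace X] (T : X → X) (μ : Measure X)
    (Φ Ψ : PartUnity X) : ℝ :=
  Filter.atTop.limsup fun n : ℕ =>
    condStatEnt μ (PartUnity.dyn T Φ n) (PartUnity.dyn T Ψ n) / (n : ℝ)

/-- The metric entropy `h̃_μ(T)`: supremum of `h̃_μ(T,Φ)` over continuous
partitions of unity. -/
noncomputable def metEnt [TopologicalSpace X] [MeasurableSpace X]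
    (T : X → X) (μ : Measure X) : EReal :=
  ⨆ Φ : {Φ : PartUnity X // Φ.Cont}, ((locEnt T μ Φ.1 : ℝ) : EReal)

/-! ### Topological entropy via partitions of unity -/

/-- The topological static entropy `H̃(Φ) = Σ_φ sup φ`. -/
noncomputable def topStat (Φ : PartUnity X) : ℝ := ∑ i, ⨆ x, Φ.f i x

/-- The local topological entropy `h̃(T,Φ) = lim_n (1/n) log H̃(Φ₀ⁿ⁻¹)`. -/
noncomputable def topLocEnt (T : X → X) (Φ : PartUnity X) : ℝ :=
  Filter.atTop.limsup fun n : ℕ => Real.log (topStat (PartUnity.dyn T Φ n)) / (n : ℝ)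

/-- The topological entropy `h̃_top(T)`: supremum of `h̃(T,Φ)` over continuous
partitions of unity. -/
noncomputable def topEnt [TopologicalSpace X] (T : X → X) : EReal :=
  ⨆ Φ : {Φ : PartUnity X // Φ.Cont}, ((topLocEnt T Φ.1 : ℝ) : EReal)

/-! ### Classical Kolmogorov–Sinai entropy -/

/-- A finite Borel partition of `X` (indexed; atoms may be empty). -/
structure FinBorelPart (X : Type*) [MeasurableSpace X] where
  n : ℕ
  A : Fin n → Set X
  meas : ∀ i, MeasurableSet (A i)
  disj : ∀ i j, i ≠ j → Disjoint (A i) (A j)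
  cover : ⋃ i, A i = Set.univ

/-- Local Kolmogorov–Sinai entropy `h_μ(T,𝒜) = lim_n (1/n) Σ_{A ∈ 𝒜₀ⁿ⁻¹} −μ(A) log μ(A)`. -/
noncomputable def ksLocEnt [MeasurableSpace X] (T : X → X) (μ : Measure X)
    (P : FinBorelPart X) : ℝ :=
  Filter.atTop.limsup fun n : ℕ =>
    (∑ σ : Fin n → Fin P.n,
      Real.negMulLog (μ (⋂ i : Fin n, T^[(i : ℕ)] ⁻¹' P.A (σ i))).toReal) / (n : ℝ)

/-- The Kolmogorov–Sinai metric entropy `h_μ(T)`. -/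
noncomputable def ksEnt [MeasurableSpace X] (T : X → X) (μ : Measure X) : EReal :=
  ⨆ P : FinBorelPart X, ((ksLocEnt T μ P : ℝ) : EReal)

/-! ### Classical topological entropy via open covers -/

/-- A finite open cover of `X`. -/
structure FinOpenCover (X : Type*) [TopologicalSpace X] where
  n : ℕ
  U : Fin n → Set X
  opn : ∀ i, IsOpen (U i)
  cov : ⋃ i, U i = Set.univ

/-- The member `⋂_{i<n} T^{-i} U_{σ(i)}` of the dynamical refinement of a cover. -/
def dynSet (T : X → X) {m : ℕ} (U : Fin m → Set X) (n : ℕ) (σ : Fin n → Fin m) : Set X :=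
  ⋂ i : Fin n, T^[(i : ℕ)] ⁻¹' U (σ i)

/-- Minimal cardinality of a subfamily of `V` covering `S`. -/
noncomputable def coverNum {α : Type*} [Fintype α] (V : α → Set X) (S : Set X) : ℕ :=
  sInf {k | ∃ t : Finset α, t.card = k ∧ S ⊆ ⋃ i ∈ t, V i}

/-- The local classical topological entropy `h(T,𝒰)` of an open cover. -/
noncomputable def covLocEnt [TopologicalSpace X] (T : X → X) (C : FinOpenCover X) : ℝ :=
  Filter.atTop.limsup fun n : ℕ =>
    Real.log ((coverNum (fun σ : Fin n → Fin C.n => dynSet T C.U n σ) Set.univ : ℕ) : ℝ) / (n : ℝ)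

/-- The classical topological entropy `h_top(T)` via open covers. -/
noncomputable def topEntCov [TopologicalSpace X] (T : X → X) : EReal :=
  ⨆ C : FinOpenCover X, ((covLocEnt T C : ℝ) : EReal)

/-! ### Misiurewicz topological tail entropy -/

/-- The local conditional topological entropy `h(𝒰|𝒱)` of two open covers. -/
noncomputable def misCondLoc [TopologicalSpace X] (T : X → X) (CU CV : FinOpenCover X) : ℝ :=
  Filter.atTop.limsup fun n : ℕ =>
    Real.log (((⨆ τ : Fin n → Fin CV.n,
      coverNum (fun σ : Fin n → Fin CU.n => dynSet T CU.U n σ) (dynSet T CV.U n τ) : ℕ)) : ℝ) / (n : ℝ)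

/-- The conditional topological entropy `h(T|𝒱) = sup_𝒰 h(𝒰|𝒱)`. -/
noncomputable def misCond [TopologicalSpace X] (T : X → X) (CV : FinOpenCover X) : EReal :=
  ⨆ CU : FinOpenCover X, ((misCondLoc T CU CV : ℝ) : EReal)

/-- Misiurewicz's topological tail entropy `h*(T) = inf_𝒱 h(T|𝒱)`. -/
noncomputable def misTail [TopologicalSpace X] (T : X → X) : EReal :=
  ⨅ CV : FinOpenCover X, misCond T CV

/-! ### Topological tail entropy via partitions of unity -/

/-- `H̃(Φ|ψ) = Σ_φ sup_{supp ψ} φ`. -/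
noncomputable def condTopStatPU [TopologicalSpace X] (Φ : PartUnity X) (ψ : X → ℝ) : ℝ :=
  ∑ i, ⨆ x ∈ tsupport ψ, Φ.f i x

/-- The weight set `D(Ψ) = {a : inf ψ ≤ a_ψ ≤ sup ψ, Σ a_ψ = 1}`. -/
def weights (Ψ : PartUnity X) : Set (Fin Ψ.n → ℝ) :=
  {a | (∀ j, (⨅ x, Ψ.f j x) ≤ a j ∧ a j ≤ ⨆ x, Ψ.f j x) ∧ ∑ j, a j = 1}

/-- `H̃_n(Φ|Ψ) = sup_{a ∈ D(Ψ₀ⁿ⁻¹)} Σ_ψ a_ψ H̃(Φ₀ⁿ⁻¹|ψ)`. -/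
noncomputable def tailStat [TopologicalSpace X] (T : X → X) (Φ Ψ : PartUnity X) (n : ℕ) : ℝ :=
  sSup {r | ∃ a ∈ weights (PartUnity.dyn T Ψ n),
    r = ∑ j, a j * condTopStatPU (PartUnity.dyn T Φ n) ((PartUnity.dyn T Ψ n).f j)}

/-- The local conditional topological entropy `h̃(Φ|Ψ) = limsup_n (1/n) log H̃_n(Φ|Ψ)`. -/
noncomputable def tailLoc [TopologicalSpace X] (T : X → X) (Φ Ψ : PartUnity X) : ℝ :=
  Filter.atTop.limsup fun n : ℕ => Real.log (tailStat T Φ Ψ n) / (n : ℝ)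

/-- The conditional topological entropy `h̃(T|Ψ) = sup_Φ h̃(Φ|Ψ)` over continuous `Φ`. -/
noncomputable def condTopEntPU [TopologicalSpace X] (T : X → X) (Ψ : PartUnity X) : EReal :=
  ⨆ Φ : {Φ : PartUnity X // Φ.Cont}, ((tailLoc T Φ.1 Ψ : ℝ) : EReal)

/-- The topological tail entropy `h̃*(T) = inf_Ψ h̃(T|Ψ)` over continuous `Ψ`. -/
noncomputable def tailEntPU [TopologicalSpace X] (T : X → X) : EReal :=
  ⨅ Ψ : {Ψ : PartUnity X // Ψ.Cont}, condTopEntPU T Ψ.1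

/-! ### Pressures -/

/-- The Birkhoff sum `S_n g = Σ_{i<n} g ∘ Tⁱ`. -/
def birkhoff (T : X → X) (g : X → ℝ) (n : ℕ) (x : X) : ℝ :=
  ∑ i ∈ Finset.range n, g (T^[i] x)

/-- The static pressure `P̃(T,g,Φ,n) = Σ_{φ ∈ Φ₀ⁿ⁻¹} sup (φ e^{S_n g})`. -/
noncomputable def puPressStat (T : X → X) (g : X → ℝ) (Φ : PartUnity X) (n : ℕ) : ℝ :=
  ∑ i, ⨆ x, (PartUnity.dyn T Φ n).f i x * Real.exp (birkhoff T g n x)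

/-- The local topological pressure `P̃_top(T,g,Φ) = lim_n (1/n) log P̃(T,g,Φ,n)`. -/
noncomputable def puLocPress (T : X → X) (g : X → ℝ) (Φ : PartUnity X) : ℝ :=
  Filter.atTop.limsup fun n : ℕ => Real.log (puPressStat T g Φ n) / (n : ℝ)

/-- The topological pressure `P̃_top(T,g)` via continuous partitions of unity. -/
noncomputable def puTopPress [TopologicalSpace X] (T : X → X) (g : X → ℝ) : EReal :=
  ⨆ Φ : {Φ : PartUnity X // Φ.Cont}, ((puLocPress T g Φ.1 : ℝ) : EReal)

/-- The classical static pressure of an open cover: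
`inf { Σ_{V ∈ 𝒱} sup_V e^{S_n g} : 𝒱 a subcover of 𝒰₀ⁿ⁻¹ }`. -/
noncomputable def covPressStat [TopologicalSpace X] (T : X → X) (g : X → ℝ)
    (C : FinOpenCover X) (n : ℕ) : ℝ :=
  sInf {r | ∃ t : Finset (Fin n → Fin C.n),
    (Set.univ ⊆ ⋃ σ ∈ t, dynSet T C.U n σ) ∧
    r = ∑ σ ∈ t, ⨆ x ∈ dynSet T C.U n σ, Real.exp (birkhoff T g n x)}

/-- The local classical topological pressure of an open cover. -/
noncomputable def covLocPress [TopologicalSpace X] (T : X → X) (g : X → ℝ)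
    (C : FinOpenCover X) : ℝ :=
  Filter.atTop.limsup fun n : ℕ => Real.log (covPressStat T g C n) / (n : ℝ)

/-- The classical topological pressure `P_top(T,g)` via open covers. -/
noncomputable def topPress [TopologicalSpace X] (T : X → X) (g : X → ℝ) : EReal :=
  ⨆ C : FinOpenCover X, ((covLocPress T g C : ℝ) : EReal)

/-! ### Topological tail pressure -/

/-- `P̃_n(T,g,Φ|Ψ) = sup_{a ∈ D(Ψ₀ⁿ⁻¹)} Σ_ψ a_ψ Σ_φ sup_{supp ψ} (φ e^{S_n g})`. -/
noncomputable def tailPressStat [TopologicalSpace X] (T : X → X) (g : X → ℝ)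
    (Φ Ψ : PartUnity X) (n : ℕ) : ℝ :=
  sSup {r | ∃ a ∈ weights (PartUnity.dyn T Ψ n),
    r = ∑ j, a j * ∑ i, ⨆ x ∈ tsupport ((PartUnity.dyn T Ψ n).f j),
      (PartUnity.dyn T Φ n).f i x * Real.exp (birkhoff T g n x)}

/-- The local topological tail pressure `P̃(T,g,Φ|Ψ) = limsup_n (1/n) log P̃_n(T,g,Φ|Ψ)`. -/
noncomputable def tailLocPress [TopologicalSpace X] (T : X → X) (g : X → ℝ)
    (Φ Ψ : PartUnity X) : ℝ :=
  Filter.atTop.limsup fun n : ℕ => Real.log (tailPressStat T g Φ Ψ n) / (n : ℝ)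

/-- The conditional topological pressure `P̃(T,g|Ψ) = sup_Φ P̃(T,g,Φ|Ψ)` over continuous `Φ`. -/
noncomputable def condTopPressPU [TopologicalSpace X] (T : X → X) (g : X → ℝ)
    (Ψ : PartUnity X) : EReal :=
  ⨆ Φ : {Φ : PartUnity X // Φ.Cont}, ((tailLocPress T g Φ.1 Ψ : ℝ) : EReal)

/-- The topological tail pressure `P̃*(T,g) = inf_Ψ P̃(T,g|Ψ)` over continuous `Ψ`. -/
noncomputable def puTailPress [TopologicalSpace X] (T : X → X) (g : X → ℝ) : EReal :=
  ⨅ Ψ : {Ψ : PartUnity X // Ψ.Cont}, condTopPressPU T g Ψ.1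

/-! ### Classical topological tail pressure (Li–Chen–Cheng) -/

/-- The Bowen ball `B(x,ε,n) = {y : d(Tⁱx,Tⁱy) < ε for all 0 ≤ i < n}`. -/
def bowenBall [PseudoMetricSpace X] (T : X → X) (x : X) (ε : ℝ) (n : ℕ) : Set X :=
  {y | ∀ i < n, dist (T^[i] x) (T^[i] y) < ε}

/-- `E` is `(n,δ)`-separated: distinct points `y,z ∈ E` satisfy `d(Tⁱy,Tⁱz) > δ`
for some `0 ≤ i < n`. -/
def IsSep [PseudoMetricSpace X] (T : X → X) (n : ℕ) (δ : ℝ) (E : Finset X) : Prop :=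
  ∀ y ∈ E, ∀ z ∈ E, y ≠ z → ∃ i < n, δ < dist (T^[i] y) (T^[i] z)

/-- `P_n(T,g,δ,ε) = sup_x sup { Σ_{y∈E} e^{S_n g(y)} : E (n,δ)-separated ⊆ B(x,ε,n) }`. -/
noncomputable def sepPress [PseudoMetricSpace X] (T : X → X) (g : X → ℝ)
    (n : ℕ) (δ ε : ℝ) : ℝ :=
  ⨆ x : X, sSup {r | ∃ E : Finset X, ↑E ⊆ bowenBall T x ε n ∧ IsSep T n δ E ∧
    r = ∑ y ∈ E, Real.exp (birkhoff T g n y)}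

/-- The classical topological tail pressure
`P*(T,g) = lim_{ε→0} lim_{δ→0} limsup_n (1/n) log P_n(T,g,δ,ε)`
(the inner limits are monotone, hence given by `inf_ε sup_δ`). -/
noncomputable def tailPress [PseudoMetricSpace X] (T : X → X) (g : X → ℝ) : EReal :=
  ⨅ ε : {ε : ℝ // 0 < ε}, ⨆ δ : {δ : ℝ // 0 < δ},
    Filter.atTop.limsup fun n : ℕ => ((Real.log (sepPress T g n δ.1 ε.1) / (n : ℝ) : ℝ) : EReal)


/-! ### Auxiliary material for the proof of `ksEnt_le_metEnt` -/

section KSAux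

open Real MeasureTheory Filter

private lemma integrable_of_bdd {X : Type*} [MeasurableSpace X] {μ : Measure X}
    [IsFiniteMeasure μ] {f : X → ℝ} (hf : Measurable f) {C : ℝ} (h : ∀ x, |f x| ≤ C) :
    Integrable f μ :=
  (integrable_const C).mono' hf.aestronglyMeasurable
    (Filter.Eventually.of_forall (by simpa using h))

private lemma abs_mul_log_le_one {t : ℝ} (h0 : 0 ≤ t) (h1 : t ≤ 1) : |t * Real.log t| ≤ 1 := by
  rcases eq_or_lt_of_le h0 with h | h
  · simp [← h]
  · rw [abs_of_nonpos (Real.mul_log_nonpos h0 h1)]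
    have hinv : Real.log t⁻¹ ≤ t⁻¹ - 1 := Real.log_le_sub_one_of_pos (by positivity)
    rw [Real.log_inv] at hinv
    have h2 : t * (t⁻¹ - 1) = 1 - t := by field_simp
    nlinarith [h.le]

private lemma gibbs {ι : Type*} (s : Finset ι) (r u : ι → ℝ) (hr : ∀ i ∈ s, 0 ≤ r i)
    (hu : ∀ i ∈ s, 0 ≤ u i) (hpos : ∀ i ∈ s, 0 < r i → 0 < u i) :
    ∑ i ∈ s, r i * Real.log (u i) ≤
      (∑ i ∈ s, r i * Real.log (r i)) + ((∑ i ∈ s, u i) - ∑ i ∈ s, r i) := by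
  have key : ∀ i ∈ s, r i * Real.log (u i) ≤ r i * Real.log (r i) + (u i - r i) := by
    intro i hi
    rcases (hr i hi).eq_or_lt with h | h
    · simp only [← h, zero_mul, mul_zero, zero_add, sub_zero]
      exact hu i hi
    · have hui : 0 < u i := hpos i hi h
      have hl := Real.log_le_sub_one_of_pos (div_pos hui h)
      rw [Real.log_div hui.ne' h.ne'] at hl
      have h2 := mul_le_mul_of_nonneg_left hl h.le
      rw [mul_sub, mul_sub, mul_div_cancel₀ _ h.ne', mul_one] at h2
      linarith
  calc ∑ i ∈ s, r i * Real.log (u i) ≤ ∑ i ∈ s, (r i * Real.log (r i) + (u i - r i)) :=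
        Finset.sum_le_sum key
    _ = _ := by rw [Finset.sum_add_distrib, Finset.sum_sub_distrib]

private lemma sum_negMulLog_le_log_card {ι : Type*} [Fintype ι] [Nonempty ι] (q : ι → ℝ)
    (h0 : ∀ i, 0 ≤ q i) (h1 : ∑ i, q i = 1) :
    ∑ i, Real.negMulLog (q i) ≤ Real.log (Fintype.card ι) := by
  have hc : (0 : ℝ) < (Fintype.card ι : ℝ) := by exact_mod_cast Fintype.card_pos
  have hg := gibbs Finset.univ q (fun _ => (Fintype.card ι : ℝ)⁻¹) (fun i _ => h0 i)
    (fun i _ => by positivity) (fun i _ _ => by positivity)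
  have hsum : ∑ _i : ι, (Fintype.card ι : ℝ)⁻¹ = 1 := by
    rw [Finset.sum_const, Finset.card_univ, nsmul_eq_mul, mul_inv_cancel₀ hc.ne']
  rw [hsum, h1, sub_self, add_zero] at hg
  have hleft : ∑ i : ι, q i * Real.log (Fintype.card ι : ℝ)⁻¹ =
      -Real.log (Fintype.card ι : ℝ) := by
    rw [← Finset.sum_mul, h1, one_mul, Real.log_inv]
  rw [hleft] at hg
  have : ∑ i, Real.negMulLog (q i) = -∑ i, q i * Real.log (q i) := by
    rw [← Finset.sum_neg_distrib]
    exact Finset.sum_congr rfl fun i _ => by rw [Real.negMulLog, neg_mul]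
  rw [this]
  linarith

private lemma negMulLog_mono {x y : ℝ} (hx : 0 ≤ x) (hxy : x ≤ y) (hy : y ≤ Real.exp (-1)) :
    Real.negMulLog x ≤ Real.negMulLog y := by
  have hmono : MonotoneOn Real.negMulLog (Set.Icc 0 (Real.exp (-1))) := by
    apply monotoneOn_of_deriv_nonneg (convex_Icc _ _) Real.continuous_negMulLog.continuousOn
    · intro z hz
      rw [interior_Icc] at hz
      exact (Real.differentiableAt_negMulLog hz.1.ne').differentiableWithinAt
    · intro z hz
      rw [interior_Icc] at hz
      rw [Real.deriv_negMulLog hz.1.ne']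
      have hlt : Real.log z < -1 := by
        have := Real.log_lt_log hz.1 hz.2
        rwa [Real.log_exp] at this
      linarith
  exact hmono ⟨hx, hxy.trans hy⟩ ⟨hx.trans hxy, hy⟩ hxy

private lemma jensen_cell {X : Type*} [MeasurableSpace X] {μ : Measure X} [IsFiniteMeasure μ]
    {C : Set X} (hC : MeasurableSet C) (hC0 : μ C ≠ 0) {G : X → ℝ} (hGm : Measurable G)
    (hG0 : ∀ x, 0 ≤ G x) (hG1 : ∀ x, G x ≤ 1) :
    (∫ x in C, G x ∂μ) * Real.log ((∫ x in C, G x ∂μ) / (μ C).toReal) ≤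
      ∫ x in C, G x * Real.log (G x) ∂μ := by
  have hp : 0 < (μ C).toReal := ENNReal.toReal_pos hC0 (measure_ne_top μ C)
  haveI : NeZero (μ.restrict C) := by
    refine ⟨fun h => hC0 ?_⟩
    rw [← Measure.restrict_apply_univ, h]
    simp
  have hint : Integrable G (μ.restrict C) :=
    integrable_of_bdd hGm (C := 1) (fun x => abs_le.mpr ⟨by linarith [hG0 x], hG1 x⟩)
  have hint2 : Integrable (fun x => G x * Real.log (G x)) (μ.restrict C) :=
    integrable_of_bdd (hGm.mul (Real.measurable_log.comp hGm)) (C := 1)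
      (fun x => abs_mul_log_le_one (hG0 x) (hG1 x))
  have hj := Real.convexOn_mul_log.map_average_le Real.continuous_mul_log.continuousOn
    isClosed_Ici (Filter.Eventually.of_forall (fun x => hG0 x)) hint hint2
  rw [average_eq, average_eq, measureReal_def, Measure.restrict_apply_univ, smul_eq_mul, smul_eq_mul] at hj
  set I := ∫ x in C, G x ∂μ with hI
  set J := ∫ x in C, G x * Real.log (G x) ∂μ with hJ
  rw [mul_comm (((μ C).toReal)⁻¹) J] at hj
  have h2 := mul_le_mul_of_nonneg_left hj hp.le
  have e1 : (μ C).toReal * ((μ C).toReal⁻¹ * I * Real.log ((μ C).toReal⁻¹ * I)) =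
      I * Real.log (I / (μ C).toReal) := by
    rw [div_eq_inv_mul, ← mul_assoc, ← mul_assoc, mul_inv_cancel₀ hp.ne', one_mul]
  have e2 : (μ C).toReal * (J * (μ C).toReal⁻¹) = J := by
    field_simp
  rw [e1, e2] at h2
  exact h2

end KSAux
section KSAux2

open Real MeasureTheory Filter

variable {X : Type*}

/-- The product function `x ↦ ∏_{j<n} φ_{τ(j)}(Tʲ x)`. -/
private noncomputable def Gfun (T : X → X) (Φ : PartUnity X) (n : ℕ) (τ : Fin n → Fin Φ.n) :
    X → ℝ := fun x => ∏ j : Fin n, Φ.f (τ j) (T^[(j : ℕ)] x)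

private lemma Gfun_succ (T : X → X) (Φ : PartUnity X) (n : ℕ) (a : Fin Φ.n)
    (τ : Fin n → Fin Φ.n) :
    Gfun T Φ (n + 1) (Fin.cons a τ) = fun x => Φ.f a x * Gfun T Φ n τ (T x) := by
  funext x
  simp only [Gfun, Fin.prod_univ_succ, Fin.cons_zero, Fin.cons_succ, Fin.val_zero,
    Function.iterate_zero_apply, Fin.val_succ, Function.iterate_succ_apply]

private lemma sum_cons_reindex {M : Type*} [AddCommMonoid M] (k n : ℕ)
    (g : (Fin (n + 1) → Fin k) → M) :
    ∑ τ, g τ = ∑ a : Fin k, ∑ τ : Fin n → Fin k, g (Fin.cons a τ) := by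
  rw [← Equiv.sum_comp (Fin.consEquiv (fun _ : Fin (n + 1) => Fin k)) g,
    Fintype.sum_prod_type]
  rfl

private lemma dyn_sum (T : X → X) (Φ : PartUnity X) :
    ∀ (n : ℕ) (F : (X → ℝ) → ℝ),
      ∑ i, F ((PartUnity.dyn T Φ n).f i) = ∑ τ : Fin n → Fin Φ.n, F (Gfun T Φ n τ) := by
  intro n
  induction n with
  | zero =>
    intro F
    have h0 : ∑ i, F ((PartUnity.dyn T Φ 0).f i) = F (fun _ => 1) := by
      show ∑ i : Fin 1, F ((PartUnity.triv X).f i) = F (fun _ => 1)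
      rw [Fintype.sum_unique]
      rfl
    rw [h0, Fintype.sum_unique]
    exact congrArg F (funext fun x => by simp [Gfun])
  | succ n ih =>
    intro F
    have e1 : ∑ i, F ((PartUnity.dyn T Φ (n + 1)).f i)
        = ∑ p : Fin Φ.n × Fin (PartUnity.dyn T Φ n).n,
            F (fun x => Φ.f p.1 x * (PartUnity.dyn T Φ n).f p.2 (T x)) := by
      refine Fintype.sum_equiv
        (finProdFinEquiv.symm :
          Fin (Φ.n * ((PartUnity.dyn T Φ n).comp T).n) ≃ _) _ _ fun i => rfl
    rw [e1, Fintype.sum_prod_type, sum_cons_reindex Φ.n n (fun τ => F (Gfun T Φ (n + 1) τ))]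
    refine Finset.sum_congr rfl fun a _ => ?_
    rw [ih (fun h => F (fun x => Φ.f a x * h (T x)))]
    refine Finset.sum_congr rfl fun τ _ => ?_
    rw [Gfun_succ]

private lemma sum_Gfun (T : X → X) (Φ : PartUnity X) (n : ℕ) (x : X) :
    ∑ τ : Fin n → Fin Φ.n, Gfun T Φ n τ x = 1 := by
  have h := dyn_sum T Φ n (fun h => h x)
  rw [← h]
  exact (PartUnity.dyn T Φ n).sum_one x

private lemma statEnt_dyn [MeasurableSpace X] (T : X → X) (μ : Measure X) (Φ : PartUnity X)
    (n : ℕ) :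
    statEnt μ (PartUnity.dyn T Φ n) =
      ∑ τ : Fin n → Fin Φ.n,
        (-((∫ x, Gfun T Φ n τ x ∂μ) * Real.log (∫ x, Gfun T Φ n τ x ∂μ))
          + ∫ x, Gfun T Φ n τ x * Real.log (Gfun T Φ n τ x) ∂μ) := by
  exact dyn_sum T Φ n
    (fun h => -((∫ x, h x ∂μ) * Real.log (∫ x, h x ∂μ)) + ∫ x, h x * Real.log (h x) ∂μ)

private lemma Gfun_nonneg (T : X → X) (Φ : PartUnity X) (n : ℕ) (τ : Fin n → Fin Φ.n) (x : X) :
    0 ≤ Gfun T Φ n τ x :=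
  Finset.prod_nonneg fun j _ => Φ.nonneg _ _

private lemma Gfun_le_one (T : X → X) (Φ : PartUnity X) (n : ℕ) (τ : Fin n → Fin Φ.n) (x : X) :
    Gfun T Φ n τ x ≤ 1 :=
  Finset.prod_le_one (fun j _ => Φ.nonneg _ _) (fun j _ => Φ.le_one _ _)

private lemma Gfun_meas [MeasurableSpace X] {T : X → X} (hTm : Measurable T) {Φ : PartUnity X}
    (hΦ : ∀ b, Measurable (Φ.f b)) (n : ℕ) (τ : Fin n → Fin Φ.n) :
    Measurable (Gfun T Φ n τ) :=
  Finset.measurable_prod _ (fun j _ => (hΦ (τ j)).comp (hTm.iterate _))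

private lemma sum_Gfun_fiber (T : X → X) (Φ : PartUnity X) :
    ∀ (n : ℕ) (i : Fin n) (b : Fin Φ.n) (x : X),
      ∑ τ : Fin n → Fin Φ.n, (if τ i = b then Gfun T Φ n τ x else 0)
        = Φ.f b (T^[(i : ℕ)] x) := by
  intro n
  induction n with
  | zero => exact fun i => i.elim0
  | succ n ih =>
    intro i b x
    rw [sum_cons_reindex Φ.n n (fun τ => if τ i = b then Gfun T Φ (n + 1) τ x else 0)]
    induction i using Fin.cases with
    | zero =>
      simp only [Fin.cons_zero, Gfun_succ]
      have h1 : ∀ a : Fin Φ.n, (∑ τ : Fin n → Fin Φ.n,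
          if a = b then Φ.f a x * Gfun T Φ n τ (T x) else 0) = if a = b then Φ.f a x else 0 := by
        intro a
        by_cases hab : a = b
        · simp only [hab, if_true, ← Finset.mul_sum, sum_Gfun, mul_one]
        · simp [hab]
      rw [Finset.sum_congr rfl fun a _ => h1 a,
        Finset.sum_ite_eq' Finset.univ b fun a => Φ.f a x]
      simp
    | succ j =>
      simp only [Fin.cons_succ, Gfun_succ]
      have h1 : ∀ a : Fin Φ.n, (∑ τ : Fin n → Fin Φ.n,
          if τ j = b then Φ.f a x * Gfun T Φ n τ (T x) else 0)
          = Φ.f a x * Φ.f b (T^[(j : ℕ)] (T x)) := by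
        intro a
        rw [← ih j b (T x), Finset.mul_sum]
        exact Finset.sum_congr rfl fun τ _ => by rw [mul_ite, mul_zero]
      rw [Finset.sum_congr rfl fun a _ => h1 a, ← Finset.sum_mul, Φ.sum_one, one_mul,
        Fin.val_succ, Function.iterate_succ_apply]

/-- The classifier of a finite measurable partition. -/
private lemma exists_classifier {ι : Type*} {B : ι → Set X}
    (hBd : ∀ a a', a ≠ a' → Disjoint (B a) (B a')) (hBc : ⋃ a, B a = Set.univ) :
    ∃ cl : X → ι, ∀ x a, x ∈ B a ↔ a = cl x := by
  have h1 : ∀ x, ∃ a, x ∈ B a := fun x => Set.mem_iUnion.mp (hBc ▸ Set.mem_univ x)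
  choose cl hcl using h1
  refine ⟨cl, fun x a => ⟨fun hx => ?_, fun h => h ▸ hcl x⟩⟩
  by_contra hne
  exact Set.disjoint_left.mp (hBd a (cl x) hne) hx (hcl x)

private noncomputable def chi (A : Set X) : X → ℝ := A.indicator (fun _ => (1 : ℝ))

private lemma chi_nonneg (A : Set X) (x : X) : 0 ≤ chi A x :=
  Set.indicator_nonneg (fun _ _ => zero_le_one) x

private lemma chi_le_one (A : Set X) (x : X) : chi A x ≤ 1 := by
  by_cases h : x ∈ A <;> simp [chi, Set.indicator_apply, h]

private lemma chi_meas [MeasurableSpace X] {A : Set X} (hA : MeasurableSet A) :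
    Measurable (chi A) :=
  measurable_const.indicator hA

private lemma chi_eq_ite {A : Set X} {x : X} [Decidable (x ∈ A)] :
    chi A x = if x ∈ A then 1 else 0 := by
  simp [chi, Set.indicator_apply]

end KSAux2
section KSAux3

open Real MeasureTheory Filter

variable {X : Type*} [MeasurableSpace X]

private noncomputable def mM (μ : Measure X) (Φ : PartUnity X) (B : Fin Φ.n → Set X)
    (a b : Fin Φ.n) : ℝ := ∫ x, chi (B a) x * Φ.f b x ∂μ

private noncomputable def pDelta (μ : Measure X) (Φ : PartUnity X) (B : Fin Φ.n → Set X) : ℝ :=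
  ∑ a, ∑ b, mM μ Φ B a b * Real.log ((∫ x, Φ.f b x ∂μ) / mM μ Φ B a b)

private lemma mM_nonneg (μ : Measure X) (Φ : PartUnity X) (B : Fin Φ.n → Set X)
    (a b : Fin Φ.n) : 0 ≤ mM μ Φ B a b :=
  integral_nonneg fun x => mul_nonneg (chi_nonneg _ x) (Φ.nonneg _ x)

private lemma mM_integrable (μ : Measure X) [IsFiniteMeasure μ] (Φ : PartUnity X)
    (hΦ : ∀ b, Measurable (Φ.f b)) {B : Fin Φ.n → Set X} (hBm : ∀ a, MeasurableSet (B a))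
    (a b : Fin Φ.n) : Integrable (fun x => chi (B a) x * Φ.f b x) μ :=
  integrable_of_bdd ((chi_meas (hBm a)).mul (hΦ b)) (C := 1) fun x => by
    rw [abs_of_nonneg (mul_nonneg (chi_nonneg _ x) (Φ.nonneg _ x))]
    exact mul_le_one₀ (chi_le_one _ x) (Φ.nonneg _ x) (Φ.le_one _ x)

private lemma sum_chi {ι : Type*} [Fintype ι] [DecidableEq ι] {B : ι → Set X}
    (hBd : ∀ a a', a ≠ a' → Disjoint (B a) (B a')) (hBc : ⋃ a, B a = Set.univ) (x : X) :
    ∑ a, chi (B a) x = 1 := by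
  classical
  obtain ⟨cl, hcl⟩ := exists_classifier hBd hBc
  have h : ∀ a, chi (B a) x = if a = cl x then 1 else 0 := fun a => by
    rw [chi_eq_ite]
    exact if_congr (hcl x a) rfl rfl
  rw [Finset.sum_congr rfl fun a _ => h a,
    Finset.sum_ite_eq' Finset.univ (cl x) (fun _ => (1 : ℝ))]
  simp

private lemma sum_mM_eq (μ : Measure X) [IsFiniteMeasure μ] (Φ : PartUnity X)
    (hΦ : ∀ b, Measurable (Φ.f b)) {B : Fin Φ.n → Set X} (hBm : ∀ a, MeasurableSet (B a))
    (hBd : ∀ a a', a ≠ a' → Disjoint (B a) (B a')) (hBc : ⋃ a, B a = Set.univ)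
    (b : Fin Φ.n) : ∑ a, mM μ Φ B a b = ∫ x, Φ.f b x ∂μ := by
  classical
  rw [show ∑ a, mM μ Φ B a b = ∑ a, ∫ x, chi (B a) x * Φ.f b x ∂μ from rfl,
    ← integral_finset_sum _ fun a _ => mM_integrable μ Φ hΦ hBm a b]
  refine integral_congr_ae (Filter.Eventually.of_forall fun x => ?_)
  show ∑ a, chi (B a) x * Φ.f b x = Φ.f b x
  rw [← Finset.sum_mul, sum_chi hBd hBc x, one_mul]

private lemma mM_le_beta (μ : Measure X) [IsFiniteMeasure μ] (Φ : PartUnity X)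
    (hΦ : ∀ b, Measurable (Φ.f b)) {B : Fin Φ.n → Set X} (hBm : ∀ a, MeasurableSet (B a))
    (hBd : ∀ a a', a ≠ a' → Disjoint (B a) (B a')) (hBc : ⋃ a, B a = Set.univ)
    (a b : Fin Φ.n) : mM μ Φ B a b ≤ ∫ x, Φ.f b x ∂μ := by
  rw [← sum_mM_eq μ Φ hΦ hBm hBd hBc b]
  exact Finset.single_le_sum (fun a' _ => mM_nonneg μ Φ B a' b) (Finset.mem_univ a)

private lemma pDelta_nonneg (μ : Measure X) [IsFiniteMeasure μ] (Φ : PartUnity X)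
    (hΦ : ∀ b, Measurable (Φ.f b)) {B : Fin Φ.n → Set X} (hBm : ∀ a, MeasurableSet (B a))
    (hBd : ∀ a a', a ≠ a' → Disjoint (B a) (B a')) (hBc : ⋃ a, B a = Set.univ) :
    0 ≤ pDelta μ Φ B := by
  refine Finset.sum_nonneg fun a _ => Finset.sum_nonneg fun b _ => ?_
  rcases (mM_nonneg μ Φ B a b).eq_or_lt with h | h
  · rw [← h]; simp
  · exact mul_nonneg h.le (Real.log_nonneg ((one_le_div h).mpr
      (mM_le_beta μ Φ hΦ hBm hBd hBc a b)))

private lemma pDelta_le (μ : Measure X) [IsProbabilityMeasure μ] (Φ : PartUnity X)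
    (hΦ : ∀ b, Measurable (Φ.f b)) {B : Fin Φ.n → Set X} (hBm : ∀ a, MeasurableSet (B a))
    (hBd : ∀ a a', a ≠ a' → Disjoint (B a) (B a')) (hBc : ⋃ a, B a = Set.univ)
    {ε : ℝ} (hε0 : 0 < ε) (hεe : ε ≤ Real.exp (-1))
    (hoff : ∀ a b, a ≠ b → mM μ Φ B a b ≤ ε) :
    pDelta μ Φ B ≤ (Φ.n : ℝ) ^ 2 * (ε + Real.negMulLog ε) := by
  classical
  have hexp1 : Real.exp (-1) ≤ 1 := by
    rw [← Real.exp_zero]; exact Real.exp_le_exp.mpr (by norm_num)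
  have hβ1 : ∀ b : Fin Φ.n, ∫ x, Φ.f b x ∂μ ≤ 1 := by
    intro b
    calc ∫ x, Φ.f b x ∂μ ≤ ∫ _x, (1 : ℝ) ∂μ :=
          integral_mono (integrable_of_bdd (hΦ b) (C := 1)
            (fun x => abs_le.mpr ⟨by linarith [Φ.nonneg b x], Φ.le_one b x⟩))
            (integrable_const 1) (fun x => Φ.le_one b x)
      _ = 1 := by simp
  have hcard : ∀ b : Fin Φ.n, ((Finset.univ.erase b).card : ℝ) ≤ (Φ.n : ℝ) := by
    intro b
    exact_mod_cast le_trans (Finset.card_le_univ _) (le_of_eq (Fintype.card_fin _))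
  have hβpos : ∀ a b : Fin Φ.n, 0 < mM μ Φ B a b → 0 < ∫ x, Φ.f b x ∂μ :=
    fun a b h => lt_of_lt_of_le h (mM_le_beta μ Φ hΦ hBm hBd hBc a b)
  -- off-diagonal terms
  have hod : ∀ a b : Fin Φ.n, a ≠ b →
      mM μ Φ B a b * Real.log ((∫ x, Φ.f b x ∂μ) / mM μ Φ B a b) ≤ Real.negMulLog ε := by
    intro a b hab
    rcases (mM_nonneg μ Φ B a b).eq_or_lt with h | h
    · rw [← h]
      simpa using Real.negMulLog_nonneg hε0.le (hεe.trans hexp1)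
    · have h1 : Real.log ((∫ x, Φ.f b x ∂μ) / mM μ Φ B a b)
          ≤ Real.log (1 / mM μ Φ B a b) := by
        have h2 : (∫ x, Φ.f b x ∂μ) / mM μ Φ B a b ≤ 1 / mM μ Φ B a b := by
          gcongr
          exact hβ1 b
        exact Real.log_le_log (div_pos (hβpos a b h) h) h2
      calc mM μ Φ B a b * Real.log ((∫ x, Φ.f b x ∂μ) / mM μ Φ B a b)
          ≤ mM μ Φ B a b * Real.log (1 / mM μ Φ B a b) :=
            mul_le_mul_of_nonneg_left h1 h.le
        _ = Real.negMulLog (mM μ Φ B a b) := by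
            rw [one_div, Real.log_inv, Real.negMulLog]; ring
        _ ≤ Real.negMulLog ε := negMulLog_mono h.le (hoff a b hab) hεe
  -- diagonal terms
  have hd : ∀ b : Fin Φ.n,
      mM μ Φ B b b * Real.log ((∫ x, Φ.f b x ∂μ) / mM μ Φ B b b)
        ≤ (∫ x, Φ.f b x ∂μ) - mM μ Φ B b b := by
    intro b
    rcases (mM_nonneg μ Φ B b b).eq_or_lt with h | h
    · rw [← h]
      simpa using integral_nonneg fun x => Φ.nonneg b x
    · have h1 := Real.log_le_sub_one_of_pos (div_pos (hβpos b b h) h)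
      have h2 := mul_le_mul_of_nonneg_left h1 h.le
      rw [mul_sub, mul_one, mul_div_cancel₀ _ h.ne'] at h2
      linarith
  -- assemble
  rw [pDelta, Finset.sum_comm]
  have hrow : ∀ b : Fin Φ.n,
      ∑ a, mM μ Φ B a b * Real.log ((∫ x, Φ.f b x ∂μ) / mM μ Φ B a b)
        ≤ ((∫ x, Φ.f b x ∂μ) - mM μ Φ B b b) + (Φ.n : ℝ) * Real.negMulLog ε := by
    intro b
    rw [← Finset.add_sum_erase _ _ (Finset.mem_univ b)]
    refine add_le_add (hd b) ?_
    calc ∑ a ∈ Finset.univ.erase b, mM μ Φ B a b * Real.log ((∫ x, Φ.f b x ∂μ) / mM μ Φ B a b)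
        ≤ ∑ _a ∈ Finset.univ.erase b, Real.negMulLog ε :=
          Finset.sum_le_sum fun a ha => hod a b (Finset.ne_of_mem_erase ha)
      _ = ((Finset.univ.erase b).card : ℝ) * Real.negMulLog ε := by
          rw [Finset.sum_const, nsmul_eq_mul]
      _ ≤ (Φ.n : ℝ) * Real.negMulLog ε :=
          mul_le_mul_of_nonneg_right (hcard b)
            (Real.negMulLog_nonneg hε0.le (hεe.trans hexp1))
  have hdiag : ∑ b : Fin Φ.n, ((∫ x, Φ.f b x ∂μ) - mM μ Φ B b b) ≤ (Φ.n : ℝ) * ((Φ.n : ℝ) * ε) := by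
    have h1 : ∀ b : Fin Φ.n, (∫ x, Φ.f b x ∂μ) - mM μ Φ B b b
        = ∑ a ∈ Finset.univ.erase b, mM μ Φ B a b := by
      intro b
      rw [← sum_mM_eq μ Φ hΦ hBm hBd hBc b, ← Finset.add_sum_erase _ _ (Finset.mem_univ b)]
      ring
    calc ∑ b : Fin Φ.n, ((∫ x, Φ.f b x ∂μ) - mM μ Φ B b b)
        = ∑ b : Fin Φ.n, ∑ a ∈ Finset.univ.erase b, mM μ Φ B a b :=
          Finset.sum_congr rfl fun b _ => h1 b
      _ ≤ ∑ _b : Fin Φ.n, (Φ.n : ℝ) * ε := by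
          refine Finset.sum_le_sum fun b _ => ?_
          calc ∑ a ∈ Finset.univ.erase b, mM μ Φ B a b ≤ ∑ _a ∈ Finset.univ.erase b, ε :=
                Finset.sum_le_sum fun a ha => hoff a b (Finset.ne_of_mem_erase ha)
            _ = ((Finset.univ.erase b).card : ℝ) * ε := by rw [Finset.sum_const, nsmul_eq_mul]
            _ ≤ (Φ.n : ℝ) * ε := mul_le_mul_of_nonneg_right (hcard b) hε0.le
      _ = (Φ.n : ℝ) * ((Φ.n : ℝ) * ε) := by
          rw [Finset.sum_const, Finset.card_univ, Fintype.card_fin, nsmul_eq_mul]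
  calc ∑ b : Fin Φ.n, ∑ a, mM μ Φ B a b * Real.log ((∫ x, Φ.f b x ∂μ) / mM μ Φ B a b)
      ≤ ∑ b : Fin Φ.n, (((∫ x, Φ.f b x ∂μ) - mM μ Φ B b b) + (Φ.n : ℝ) * Real.negMulLog ε) :=
        Finset.sum_le_sum fun b _ => hrow b
    _ = (∑ b : Fin Φ.n, ((∫ x, Φ.f b x ∂μ) - mM μ Φ B b b))
        + (Φ.n : ℝ) * ((Φ.n : ℝ) * Real.negMulLog ε) := by
        rw [Finset.sum_add_distrib, Finset.sum_const, Finset.card_univ, Fintype.card_fin,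
          nsmul_eq_mul]
    _ ≤ (Φ.n : ℝ) * ((Φ.n : ℝ) * ε) + (Φ.n : ℝ) * ((Φ.n : ℝ) * Real.negMulLog ε) :=
        add_le_add_left hdiag _
    _ = (Φ.n : ℝ) ^ 2 * (ε + Real.negMulLog ε) := by ring

private lemma statEnt_dyn_le {T : X → X} (hTm : Measurable T) (μ : Measure X)
    [IsProbabilityMeasure μ] (Φ : PartUnity X) (hΦ : ∀ b, Measurable (Φ.f b))
    (hk : 1 ≤ Φ.n) (n : ℕ) :
    statEnt μ (PartUnity.dyn T Φ n) ≤ (n : ℝ) * Real.log Φ.n := by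
  haveI : Nonempty (Fin n → Fin Φ.n) := ⟨fun _ => ⟨0, hk⟩⟩
  rw [statEnt_dyn]
  have hint : ∀ τ : Fin n → Fin Φ.n, Integrable (Gfun T Φ n τ) μ := fun τ =>
    integrable_of_bdd (Gfun_meas hTm hΦ n τ) (C := 1)
      (fun x => abs_le.mpr ⟨by linarith [Gfun_nonneg T Φ n τ x], Gfun_le_one T Φ n τ x⟩)
  have hq0 : ∀ τ : Fin n → Fin Φ.n, 0 ≤ ∫ x, Gfun T Φ n τ x ∂μ :=
    fun τ => integral_nonneg fun x => Gfun_nonneg T Φ n τ x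
  have hq1 : ∑ τ : Fin n → Fin Φ.n, ∫ x, Gfun T Φ n τ x ∂μ = 1 := by
    rw [← integral_finset_sum _ fun τ _ => hint τ]
    simp only [sum_Gfun]
    simp
  have hterm : ∀ τ : Fin n → Fin Φ.n,
      -((∫ x, Gfun T Φ n τ x ∂μ) * Real.log (∫ x, Gfun T Φ n τ x ∂μ))
        + (∫ x, Gfun T Φ n τ x * Real.log (Gfun T Φ n τ x) ∂μ)
      ≤ Real.negMulLog (∫ x, Gfun T Φ n τ x ∂μ) := by
    intro τ
    have h2 : (∫ x, Gfun T Φ n τ x * Real.log (Gfun T Φ n τ x) ∂μ) ≤ 0 :=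
      integral_nonpos_of_ae (Filter.Eventually.of_forall fun x =>
        Real.mul_log_nonpos (Gfun_nonneg T Φ n τ x) (Gfun_le_one T Φ n τ x))
    rw [Real.negMulLog, neg_mul]
    linarith
  calc ∑ τ : Fin n → Fin Φ.n,
        (-((∫ x, Gfun T Φ n τ x ∂μ) * Real.log (∫ x, Gfun T Φ n τ x ∂μ))
          + ∫ x, Gfun T Φ n τ x * Real.log (Gfun T Φ n τ x) ∂μ)
      ≤ ∑ τ : Fin n → Fin Φ.n, Real.negMulLog (∫ x, Gfun T Φ n τ x ∂μ) :=
        Finset.sum_le_sum fun τ _ => hterm τ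
    _ ≤ Real.log (Fintype.card (Fin n → Fin Φ.n)) :=
        sum_negMulLog_le_log_card _ hq0 hq1
    _ = (n : ℝ) * Real.log Φ.n := by
        rw [Fintype.card_fun, Fintype.card_fin, Fintype.card_fin, Nat.cast_pow, Real.log_pow]

end KSAux3
section KSAux4

open Real MeasureTheory Filter

variable {X : Type*} [MeasurableSpace X]

private lemma key_ineq {T : X → X} (hTm : Measurable T) {μ : Measure X}
    [IsProbabilityMeasure μ] (hμT : MeasurePreserving T μ μ) (Φ : PartUnity X)
    (hΦ : ∀ b, Measurable (Φ.f b)) (B : Fin Φ.n → Set X) (hBm : ∀ a, MeasurableSet (B a))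
    (hBd : ∀ a a', a ≠ a' → Disjoint (B a) (B a')) (hBc : ⋃ a, B a = Set.univ) (n : ℕ) :
    ∑ σ : Fin n → Fin Φ.n,
      Real.negMulLog (μ (⋂ i : Fin n, T^[(i : ℕ)] ⁻¹' B (σ i))).toReal ≤
      statEnt μ (PartUnity.dyn T Φ n) + (n : ℝ) * pDelta μ Φ B := by
  classical
  obtain ⟨cl, hcl⟩ := exists_classifier hBd hBc
  let Cc : (Fin n → Fin Φ.n) → Set X := fun σ => ⋂ i : Fin n, T^[(i : ℕ)] ⁻¹' B (σ i)
  let G : (Fin n → Fin Φ.n) → X → ℝ := fun τ => Gfun T Φ n τ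
  let q : (Fin n → Fin Φ.n) → ℝ := fun τ => ∫ x, G τ x ∂μ
  let p : (Fin n → Fin Φ.n) → ℝ := fun σ => (μ (Cc σ)).toReal
  let r : (Fin n → Fin Φ.n) → (Fin n → Fin Φ.n) → ℝ := fun σ τ => ∫ x in Cc σ, G τ x ∂μ
  let w : Fin Φ.n → Fin Φ.n → ℝ := fun a b => mM μ Φ B a b / ∫ x, Φ.f b x ∂μ
  let u : (Fin n → Fin Φ.n) → (Fin n → Fin Φ.n) → ℝ :=
    fun σ τ => q τ * ∏ i : Fin n, w (σ i) (τ i)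
  -- measurability and bounds
  have hCm : ∀ σ, MeasurableSet (Cc σ) := fun σ =>
    MeasurableSet.iInter fun i => (hTm.iterate (i : ℕ)) (hBm (σ i))
  have hG0 : ∀ τ x, 0 ≤ G τ x := fun τ x => Gfun_nonneg T Φ n τ x
  have hG1 : ∀ τ x, G τ x ≤ 1 := fun τ x => Gfun_le_one T Φ n τ x
  have hGm : ∀ τ, Measurable (G τ) := fun τ => Gfun_meas hTm hΦ n τ
  have hGb : ∀ τ x, |G τ x| ≤ 1 := fun τ x => abs_le.mpr ⟨by linarith [hG0 τ x], hG1 τ x⟩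
  have hGint : ∀ τ, Integrable (G τ) μ := fun τ => integrable_of_bdd (hGm τ) (hGb τ)
  -- the classifier vector
  let clv : X → (Fin n → Fin Φ.n) := fun x i => cl (T^[(i : ℕ)] x)
  have hmem : ∀ x σ, x ∈ Cc σ ↔ σ = clv x := by
    intro x σ
    simp only [Cc, Set.mem_iInter, Set.mem_preimage]
    constructor
    · intro h
      funext i
      exact (hcl _ _).mp (h i)
    · intro h i
      rw [h]
      exact (hcl _ _).mpr rfl
  have hchiC : ∀ x σ, chi (Cc σ) x = if σ = clv x then 1 else 0 := by
    intro x σ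
    rw [chi_eq_ite]
    exact if_congr (hmem x σ) rfl rfl
  -- splitting integrals over the cells
  have hdisC : ((Finset.univ : Finset (Fin n → Fin Φ.n)) : Set (Fin n → Fin Φ.n)).Pairwise
      (Function.onFun Disjoint Cc) := by
    intro σ _ σ' _ hne
    refine Set.disjoint_left.mpr fun x hx hx' => hne ?_
    rw [(hmem x σ).mp hx, (hmem x σ').mp hx']
  have hUC : ⋃ σ ∈ (Finset.univ : Finset (Fin n → Fin Φ.n)), Cc σ = Set.univ := by
    refine Set.eq_univ_of_forall fun x => ?_
    exact Set.mem_biUnion (Finset.mem_univ (clv x)) ((hmem x (clv x)).mpr rfl)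
  have hsplit : ∀ f : X → ℝ, Measurable f → (∀ x, |f x| ≤ 1) →
      ∫ x, f x ∂μ = ∑ σ, ∫ x in Cc σ, f x ∂μ := by
    intro f hm hb
    calc ∫ x, f x ∂μ = ∫ x in ⋃ σ ∈ (Finset.univ : Finset (Fin n → Fin Φ.n)), Cc σ, f x ∂μ := by
          rw [hUC, Measure.restrict_univ]
      _ = ∑ σ, ∫ x in Cc σ, f x ∂μ :=
          integral_biUnion_finset Finset.univ (fun σ _ => hCm σ) hdisC
            (fun σ _ => (integrable_of_bdd hm hb).integrableOn)
  -- marginals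
  have hr0 : ∀ σ τ, 0 ≤ r σ τ := fun σ τ => setIntegral_nonneg (hCm σ) fun x _ => hG0 τ x
  have hq0 : ∀ τ, 0 ≤ q τ := fun τ => integral_nonneg fun x => hG0 τ x
  have hrq : ∀ τ, ∑ σ, r σ τ = q τ := fun τ => (hsplit (G τ) (hGm τ) (hGb τ)).symm
  have hrp : ∀ σ, ∑ τ, r σ τ = p σ := by
    intro σ
    calc ∑ τ, ∫ x in Cc σ, G τ x ∂μ = ∫ x in Cc σ, ∑ τ, G τ x ∂μ :=
          (integral_finset_sum _ fun τ _ => (hGint τ).integrableOn).symm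
      _ = ∫ _x in Cc σ, (1 : ℝ) ∂μ :=
          integral_congr_ae (Filter.Eventually.of_forall fun x => sum_Gfun T Φ n x)
      _ = p σ := by simp [p]; rfl
  have hq1 : ∑ τ, q τ = 1 := by
    show ∑ τ : Fin n → Fin Φ.n, ∫ x, Gfun T Φ n τ x ∂μ = 1
    rw [← integral_finset_sum _ fun τ _ => hGint τ]
    simp only [G, sum_Gfun]
    simp
  have hr1 : ∑ σ, ∑ τ, r σ τ = 1 := by
    rw [Finset.sum_comm, Finset.sum_congr rfl fun τ _ => hrq τ]
    exact hq1
  -- `r` as a full integral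
  have hrint : ∀ σ τ, r σ τ = ∫ x, chi (Cc σ) x * G τ x ∂μ := by
    intro σ τ
    show ∫ x in Cc σ, G τ x ∂μ = _
    rw [← integral_indicator (hCm σ)]
    congr 1
    funext x
    by_cases h : x ∈ Cc σ <;> simp [chi, Set.indicator_apply, h]
  -- the grouping identity
  have hint2 : ∀ (i : Fin n) (a b : Fin Φ.n) (σ τ : Fin n → Fin Φ.n), Integrable
      (fun x => (if σ i = a then chi (Cc σ) x else 0) * (if τ i = b then G τ x else 0)) μ := by
    intro i a b σ τ
    by_cases h1 : σ i = a <;> by_cases h2 : τ i = b <;> simp only [h1, h2, if_pos, if_neg,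
      if_true, if_false, eq_self_iff_true, zero_mul, mul_zero]
    · exact integrable_of_bdd ((chi_meas (hCm σ)).mul (hGm τ)) (C := 1)
        (fun x => by
          rw [abs_of_nonneg (mul_nonneg (chi_nonneg _ x) (hG0 τ x))]
          exact mul_le_one₀ (chi_le_one _ x) (hG0 τ x) (hG1 τ x))
    all_goals simpa using (integrable_const (0 : ℝ) (μ := μ))
  have hgroup : ∀ (i : Fin n) (a b : Fin Φ.n),
      (∑ σ, ∑ τ, if σ i = a ∧ τ i = b then r σ τ else 0) = mM μ Φ B a b := by
    intro i a b
    have hterm : ∀ σ τ, (if σ i = a ∧ τ i = b then r σ τ else 0)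
        = ∫ x, (if σ i = a then chi (Cc σ) x else 0) * (if τ i = b then G τ x else 0) ∂μ := by
      intro σ τ
      by_cases h1 : σ i = a <;> by_cases h2 : τ i = b <;>
        simp [h1, h2, hrint σ τ]
    have hpt : ∀ x,
        (∑ σ, ∑ τ, (if σ i = a then chi (Cc σ) x else 0) * (if τ i = b then G τ x else 0))
          = chi (B a) (T^[(i : ℕ)] x) * Φ.f b (T^[(i : ℕ)] x) := by
      intro x
      rw [← Finset.sum_mul_sum]
      congr 1
      · have e1 : ∀ σ : Fin n → Fin Φ.n, (if σ i = a then chi (Cc σ) x else 0)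
            = if σ = clv x then (if σ i = a then (1 : ℝ) else 0) else 0 := by
          intro σ
          rw [hchiC x σ]
          by_cases h1 : σ i = a <;> by_cases h2 : σ = clv x <;> simp [h1, h2]
        rw [Finset.sum_congr rfl fun σ _ => e1 σ,
          Finset.sum_ite_eq' Finset.univ (clv x) (fun σ => if σ i = a then (1 : ℝ) else 0)]
        simp only [Finset.mem_univ, if_true]
        rw [chi_eq_ite]
        refine if_congr ?_ rfl rfl
        constructor
        · intro h
          exact (hcl _ _).mpr h.symm
        · intro h
          exact ((hcl _ _).mp h).symm
      · exact sum_Gfun_fiber T Φ n i b x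
    calc (∑ σ, ∑ τ, if σ i = a ∧ τ i = b then r σ τ else 0)
        = ∑ σ, ∑ τ, ∫ x,
            (if σ i = a then chi (Cc σ) x else 0) * (if τ i = b then G τ x else 0) ∂μ :=
          Finset.sum_congr rfl fun σ _ => Finset.sum_congr rfl fun τ _ => hterm σ τ
      _ = ∑ σ, ∫ x, ∑ τ,
            (if σ i = a then chi (Cc σ) x else 0) * (if τ i = b then G τ x else 0) ∂μ :=
          Finset.sum_congr rfl fun σ _ =>
            (integral_finset_sum Finset.univ fun τ _ => hint2 i a b σ τ).symm
      _ = ∫ x, ∑ σ, ∑ τ,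
            (if σ i = a then chi (Cc σ) x else 0) * (if τ i = b then G τ x else 0) ∂μ :=
          (integral_finset_sum Finset.univ fun σ _ =>
            integrable_finset_sum Finset.univ fun τ _ => hint2 i a b σ τ).symm
      _ = ∫ x, chi (B a) (T^[(i : ℕ)] x) * Φ.f b (T^[(i : ℕ)] x) ∂μ :=
          integral_congr_ae (Filter.Eventually.of_forall hpt)
      _ = mM μ Φ B a b := by
          have hmp : MeasurePreserving (T^[(i : ℕ)]) μ μ := hμT.iterate _
          have hmeas : AEStronglyMeasurable (fun y => chi (B a) y * Φ.f b y)
              (Measure.map (T^[(i : ℕ)]) μ) := by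
            rw [hmp.map_eq]
            exact ((chi_meas (hBm a)).mul (hΦ b)).aestronglyMeasurable
          rw [show (∫ x, chi (B a) (T^[(i : ℕ)] x) * Φ.f b (T^[(i : ℕ)] x) ∂μ)
              = ∫ y, chi (B a) y * Φ.f b y ∂(Measure.map (T^[(i : ℕ)]) μ) from
            (integral_map hmp.measurable.aemeasurable hmeas).symm, hmp.map_eq]
          rfl
  -- r is dominated by the matrix entries
  have hrm : ∀ (i : Fin n) σ τ, r σ τ ≤ mM μ Φ B (σ i) (τ i) := by
    intro i σ τ
    rw [← hgroup i (σ i) (τ i)]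
    have h1 : ∀ σ' τ' : Fin n → Fin Φ.n,
        0 ≤ (if σ' i = σ i ∧ τ' i = τ i then r σ' τ' else 0) := by
      intro σ' τ'
      split_ifs
      exacts [hr0 σ' τ', le_refl 0]
    calc r σ τ = (if σ i = σ i ∧ τ i = τ i then r σ τ else 0) := by simp
      _ ≤ ∑ τ', if σ i = σ i ∧ τ' i = τ i then r σ τ' else 0 :=
          Finset.single_le_sum (fun τ' _ => h1 σ τ') (Finset.mem_univ τ)
      _ ≤ ∑ σ', ∑ τ', if σ' i = σ i ∧ τ' i = τ i then r σ' τ' else 0 :=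
          Finset.single_le_sum (fun σ' _ => Finset.sum_nonneg fun τ' _ => h1 σ' τ')
            (Finset.mem_univ σ)
  -- Jensen step
  have hJ : ∑ σ, ∑ τ, r σ τ * Real.log (r σ τ / p σ)
      ≤ ∑ τ, ∫ x, G τ x * Real.log (G τ x) ∂μ := by
    have hsp : ∀ τ, ∫ x, G τ x * Real.log (G τ x) ∂μ
        = ∑ σ, ∫ x in Cc σ, G τ x * Real.log (G τ x) ∂μ := fun τ =>
      hsplit _ ((hGm τ).mul (Real.measurable_log.comp (hGm τ)))
        (fun x => abs_mul_log_le_one (hG0 τ x) (hG1 τ x))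
    have hsp2 : ∑ τ, ∫ x, G τ x * Real.log (G τ x) ∂μ
        = ∑ σ, ∑ τ, ∫ x in Cc σ, G τ x * Real.log (G τ x) ∂μ := by
      rw [Finset.sum_congr rfl fun τ _ => hsp τ]
      exact Finset.sum_comm
    rw [hsp2]
    refine Finset.sum_le_sum fun σ _ => Finset.sum_le_sum fun τ _ => ?_
    rcases eq_or_ne (μ (Cc σ)) 0 with h0 | h0
    · have hres : μ.restrict (Cc σ) = 0 := Measure.restrict_eq_zero.mpr h0
      have hrz : r σ τ = 0 := by
        show ∫ x in Cc σ, G τ x ∂μ = 0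
        rw [hres]
        simp
      rw [hrz]
      show (0 : ℝ) * Real.log (0 / p σ) ≤ ∫ x in Cc σ, G τ x * Real.log (G τ x) ∂μ
      rw [hres]
      simp
    · exact jensen_cell (hCm σ) h0 (hGm τ) (hG0 τ) (hG1 τ)
  -- split the logarithm
  have hS1 : ∑ σ, ∑ τ, r σ τ * Real.log (r σ τ / p σ)
      = (∑ σ, ∑ τ, r σ τ * Real.log (r σ τ)) - ∑ σ, p σ * Real.log (p σ) := by
    have h1 : ∀ σ τ, r σ τ * Real.log (r σ τ / p σ)
        = r σ τ * Real.log (r σ τ) - r σ τ * Real.log (p σ) := by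
      intro σ τ
      rcases (hr0 σ τ).eq_or_lt with h | h
      · rw [← h]
        ring
      · have hpσ : 0 < p σ := lt_of_lt_of_le h (by
          rw [← hrp σ]
          exact Finset.single_le_sum (fun τ' _ => hr0 σ τ') (Finset.mem_univ τ))
        rw [Real.log_div h.ne' hpσ.ne', mul_sub]
    rw [Finset.sum_congr rfl fun σ _ => Finset.sum_congr rfl fun τ _ => h1 σ τ,
      Finset.sum_congr rfl fun σ _ => Finset.sum_sub_distrib _ _, Finset.sum_sub_distrib]
    congr 1
    refine Finset.sum_congr rfl fun σ _ => ?_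
    rw [← Finset.sum_mul, hrp σ]
  -- Gibbs step
  have hw0 : ∀ a b, 0 ≤ w a b := fun a b =>
    div_nonneg (mM_nonneg μ Φ B a b) (integral_nonneg fun x => Φ.nonneg b x)
  have hwpos : ∀ (i : Fin n) σ τ, 0 < r σ τ → 0 < w (σ i) (τ i) := by
    intro i σ τ h
    have hm : 0 < mM μ Φ B (σ i) (τ i) := lt_of_lt_of_le h (hrm i σ τ)
    exact div_pos hm (lt_of_lt_of_le hm (mM_le_beta μ Φ hΦ hBm hBd hBc _ _))
  have hqpos : ∀ σ τ, 0 < r σ τ → 0 < q τ := by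
    intro σ τ h
    exact lt_of_lt_of_le h (by
      rw [← hrq τ]
      exact Finset.single_le_sum (fun σ' _ => hr0 σ' τ) (Finset.mem_univ σ))
  have hu0 : ∀ σ τ, 0 ≤ u σ τ := fun σ τ =>
    mul_nonneg (hq0 τ) (Finset.prod_nonneg fun i _ => hw0 _ _)
  have hupos : ∀ σ τ, 0 < r σ τ → 0 < u σ τ := fun σ τ h =>
    mul_pos (hqpos σ τ h) (Finset.prod_pos fun i _ => hwpos i σ τ h)
  have hsumw : ∀ b, ∑ a, w a b ≤ 1 := by
    intro b
    rcases eq_or_ne (∫ x, Φ.f b x ∂μ) 0 with h | h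
    · have : ∀ a, w a b = 0 := fun a => by
        show mM μ Φ B a b / ∫ x, Φ.f b x ∂μ = 0
        rw [h, div_zero]
      rw [Finset.sum_congr rfl fun a _ => this a]
      simp
    · show (∑ a, mM μ Φ B a b / ∫ x, Φ.f b x ∂μ) ≤ 1
      rw [← Finset.sum_div, sum_mM_eq μ Φ hΦ hBm hBd hBc b, div_self h]
  have hsumu : ∑ σ, ∑ τ, u σ τ ≤ 1 := by
    rw [Finset.sum_comm]
    have h1 : ∀ τ, ∑ σ, u σ τ ≤ q τ := by
      intro τ
      have h2 : ∑ σ : Fin n → Fin Φ.n, ∏ i : Fin n, w (σ i) (τ i)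
          = ∏ i : Fin n, ∑ a, w a (τ i) := by
        rw [Finset.prod_univ_sum]
        rw [Fintype.piFinset_univ]
      calc ∑ σ, u σ τ = q τ * ∑ σ : Fin n → Fin Φ.n, ∏ i : Fin n, w (σ i) (τ i) := by
            rw [← Finset.mul_sum]
        _ ≤ q τ * 1 := by
            rw [h2]
            exact mul_le_mul_of_nonneg_left
              (Finset.prod_le_one (fun i _ => Finset.sum_nonneg fun a _ => hw0 a _)
                (fun i _ => hsumw (τ i))) (hq0 τ)
        _ = q τ := mul_one _
    calc ∑ τ, ∑ σ, u σ τ ≤ ∑ τ, q τ := Finset.sum_le_sum fun τ _ => h1 τ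
      _ = 1 := hq1
  have hgibbs : ∑ σ, ∑ τ, r σ τ * Real.log (u σ τ) ≤ ∑ σ, ∑ τ, r σ τ * Real.log (r σ τ) := by
    have h := gibbs (Finset.univ : Finset ((Fin n → Fin Φ.n) × (Fin n → Fin Φ.n)))
      (fun st => r st.1 st.2) (fun st => u st.1 st.2) (fun st _ => hr0 _ _)
      (fun st _ => hu0 _ _) (fun st _ hst => hupos _ _ hst)
    rw [Fintype.sum_prod_type (f := fun st : (Fin n → Fin Φ.n) × (Fin n → Fin Φ.n) =>
        r st.1 st.2 * Real.log (u st.1 st.2)),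
      Fintype.sum_prod_type (f := fun st : (Fin n → Fin Φ.n) × (Fin n → Fin Φ.n) =>
        r st.1 st.2 * Real.log (r st.1 st.2)),
      Fintype.sum_prod_type (f := fun st : (Fin n → Fin Φ.n) × (Fin n → Fin Φ.n) =>
        u st.1 st.2),
      Fintype.sum_prod_type (f := fun st : (Fin n → Fin Φ.n) × (Fin n → Fin Φ.n) =>
        r st.1 st.2)] at h
    have h2 : (∑ σ, ∑ τ, u σ τ) - (∑ σ, ∑ τ, r σ τ) ≤ 0 := by
      rw [hr1]
      linarith [hsumu]
    linarith [h, h2]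
  -- expansion of `log u`
  have hwd : ∑ a, ∑ b, mM μ Φ B a b * Real.log (w a b) = -pDelta μ Φ B := by
    rw [pDelta, ← Finset.sum_neg_distrib]
    refine Finset.sum_congr rfl fun a _ => ?_
    rw [← Finset.sum_neg_distrib]
    refine Finset.sum_congr rfl fun b _ => ?_
    rcases (mM_nonneg μ Φ B a b).eq_or_lt with h | h
    · rw [← h]
      simp
    · have hβb : 0 < ∫ x, Φ.f b x ∂μ := lt_of_lt_of_le h (mM_le_beta μ Φ hΦ hBm hBd hBc a b)
      show mM μ Φ B a b * Real.log (mM μ Φ B a b / ∫ x, Φ.f b x ∂μ) = _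
      rw [Real.log_div h.ne' hβb.ne', Real.log_div hβb.ne' h.ne']
      ring
  have hlogu : ∑ σ, ∑ τ, r σ τ * Real.log (u σ τ)
      = (∑ τ, q τ * Real.log (q τ)) - (n : ℝ) * pDelta μ Φ B := by
    have h1 : ∀ σ τ, r σ τ * Real.log (u σ τ)
        = r σ τ * Real.log (q τ) + ∑ i : Fin n, r σ τ * Real.log (w (σ i) (τ i)) := by
      intro σ τ
      rcases (hr0 σ τ).eq_or_lt with h | h
      · rw [← h]
        simp
      · show r σ τ * Real.log (q τ * ∏ i : Fin n, w (σ i) (τ i)) = _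
        rw [Real.log_mul (hqpos σ τ h).ne'
            (Finset.prod_pos fun i _ => hwpos i σ τ h).ne',
          Real.log_prod (fun i _ => (hwpos i σ τ h).ne'), mul_add, Finset.mul_sum]
    rw [Finset.sum_congr rfl fun σ _ => Finset.sum_congr rfl fun τ _ => h1 σ τ,
      Finset.sum_congr rfl fun σ _ => Finset.sum_add_distrib, Finset.sum_add_distrib]
    have hA : ∑ σ, ∑ τ, r σ τ * Real.log (q τ) = ∑ τ, q τ * Real.log (q τ) := by
      rw [Finset.sum_comm]
      refine Finset.sum_congr rfl fun τ _ => ?_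
      rw [← Finset.sum_mul, hrq τ]
    have hB : ∑ σ, ∑ τ, ∑ i : Fin n, r σ τ * Real.log (w (σ i) (τ i))
        = -((n : ℝ) * pDelta μ Φ B) := by
      have hsw : ∑ σ, ∑ τ, ∑ i : Fin n, r σ τ * Real.log (w (σ i) (τ i))
          = ∑ i : Fin n, ∑ σ, ∑ τ, r σ τ * Real.log (w (σ i) (τ i)) := by
        rw [Finset.sum_congr rfl fun σ _ => Finset.sum_comm, Finset.sum_comm]
      rw [hsw]
      have hper : ∀ i : Fin n, ∑ σ, ∑ τ, r σ τ * Real.log (w (σ i) (τ i))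
          = -pDelta μ Φ B := by
        intro i
        have hstepA : ∀ σ τ : Fin n → Fin Φ.n, r σ τ * Real.log (w (σ i) (τ i))
            = ∑ a, ∑ b, if σ i = a ∧ τ i = b then r σ τ * Real.log (w a b) else 0 := by
          intro σ τ
          have h1' : ∀ a, (∑ b, if σ i = a ∧ τ i = b then r σ τ * Real.log (w a b) else 0)
              = if σ i = a then r σ τ * Real.log (w a (τ i)) else 0 := by
            intro a
            by_cases ha : σ i = a
            · simp only [ha, true_and]
              rw [Finset.sum_ite_eq Finset.univ (τ i) (fun b => r σ τ * Real.log (w a b))]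
              simp
            · simp [ha]
          rw [Finset.sum_congr rfl fun a _ => h1' a,
            Finset.sum_ite_eq Finset.univ (σ i) (fun a => r σ τ * Real.log (w a (τ i)))]
          simp
        have hstepB :
            ∑ σ, ∑ τ, ∑ a, ∑ b, (if σ i = a ∧ τ i = b then r σ τ * Real.log (w a b) else 0)
            = ∑ a, ∑ b, (∑ σ, ∑ τ, if σ i = a ∧ τ i = b then r σ τ else 0)
                * Real.log (w a b) := by
          rw [Finset.sum_congr rfl fun σ _ => Finset.sum_comm,
            Finset.sum_congr rfl fun σ _ => Finset.sum_congr rfl fun a _ => Finset.sum_comm,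
            Finset.sum_comm,
            Finset.sum_congr rfl fun a _ => Finset.sum_comm]
          refine Finset.sum_congr rfl fun a _ => Finset.sum_congr rfl fun b _ => ?_
          rw [Finset.sum_mul]
          refine Finset.sum_congr rfl fun σ _ => ?_
          rw [Finset.sum_mul]
          refine Finset.sum_congr rfl fun τ _ => ?_
          rw [ite_mul, zero_mul]
        rw [Finset.sum_congr rfl fun σ _ => Finset.sum_congr rfl fun τ _ => hstepA σ τ,
          hstepB]
        rw [Finset.sum_congr rfl fun a _ => Finset.sum_congr rfl fun b _ => by
          rw [hgroup i a b]]
        exact hwd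
      rw [Finset.sum_congr rfl fun i _ => hper i, Finset.sum_const, Finset.card_univ,
        Fintype.card_fin, nsmul_eq_mul]
      ring
    rw [hA, hB]
    ring
  -- statEnt reformulation
  have hSE2 : statEnt μ (PartUnity.dyn T Φ n)
      = -(∑ τ, q τ * Real.log (q τ)) + ∑ τ, ∫ x, G τ x * Real.log (G τ x) ∂μ := by
    rw [statEnt_dyn T μ Φ n, Finset.sum_add_distrib, ← Finset.sum_neg_distrib]
  -- final assembly
  have hfin : ∑ σ, Real.negMulLog (p σ) = -∑ σ, p σ * Real.log (p σ) := by
    rw [← Finset.sum_neg_distrib]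
    exact Finset.sum_congr rfl fun σ _ => by rw [Real.negMulLog, neg_mul]
  show ∑ σ, Real.negMulLog (p σ) ≤ statEnt μ (PartUnity.dyn T Φ n) + (n : ℝ) * pDelta μ Φ B
  rw [hfin, hSE2]
  linarith [hJ, hS1, hgibbs, hlogu]

end KSAux4
section KSAux5

open Real MeasureTheory Filter

private lemma exists_approx {X : Type*} [MetricSpace X] [MeasurableSpace X] [BorelSpace X]
    (μ : Measure X) [IsFiniteMeasure μ] {k : ℕ} (hk : 1 ≤ k) (A : Fin k → Set X)
    (hAm : ∀ a, MeasurableSet (A a)) (hAd : ∀ a a', a ≠ a' → Disjoint (A a) (A a'))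
    {ε : ℝ} (hε : 0 < ε) :
    ∃ f : Fin k → X → ℝ, (∀ b, Continuous (f b)) ∧ (∀ b x, 0 ≤ f b x) ∧ (∀ b x, f b x ≤ 1) ∧
      (∀ x, ∑ b, f b x = 1) ∧
      (∀ a b, a ≠ b → ∫ x, chi (A a) x * f b x ∂μ ≤ ε) := by
  classical
  have hεne : (ENNReal.ofReal ε) ≠ 0 := by simp [hε]
  -- regular approximations
  have hre : ∀ a : Fin k, ∃ F U : Set X, IsClosed F ∧ F ⊆ A a ∧ IsOpen U ∧ F ⊆ U ∧
      (μ (A a \ F)).toReal ≤ ε ∧ (μ (U \ F)).toReal ≤ ε := by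
    intro a
    obtain ⟨F, hFA, hFc, hF⟩ := (hAm a).exists_isClosed_diff_lt (measure_ne_top μ _) hεne
    obtain ⟨U, hFU, hUo, _, hU⟩ :=
      hFc.measurableSet.exists_isOpen_diff_lt (measure_ne_top μ _) hεne
    refine ⟨F, U, hFc, hFA, hUo, hFU, ?_, ?_⟩
    · exact ENNReal.toReal_le_of_le_ofReal hε.le hF.le
    · exact ENNReal.toReal_le_of_le_ofReal hε.le hU.le
  choose F U hFc hFA hUo hFU hμ1 hμ2 using hre
  have hdis : ∀ a, Disjoint (U a)ᶜ (F a) :=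
    fun a => Set.disjoint_left.mpr fun x hx hxF => hx (hFU a hxF)
  have hury : ∀ a : Fin k, ∃ g : C(X, ℝ), Set.EqOn g 0 ((U a)ᶜ) ∧ Set.EqOn g 1 (F a) ∧
      ∀ x, g x ∈ Set.Icc (0 : ℝ) 1 :=
    fun a => exists_continuous_zero_one_of_isClosed (hUo a).isClosed_compl (hFc a) (hdis a)
  choose g hg0 hg1 hg01 using hury
  -- telescoping partition of unity
  let gN : ℕ → X → ℝ := fun c x => if h : c < k then g ⟨c, h⟩ x else 0
  let Q : ℕ → X → ℝ := fun b x => ∏ c ∈ Finset.range b, (1 - gN c x)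
  have hgN0 : ∀ c x, 0 ≤ gN c x := by
    intro c x
    by_cases h : c < k <;> simp only [gN, h, dif_pos, dif_neg, not_false_iff, le_refl]
    · exact (hg01 ⟨c, h⟩ x).1
  have hgN1 : ∀ c x, gN c x ≤ 1 := by
    intro c x
    by_cases h : c < k <;> simp only [gN, h, dif_pos, dif_neg, not_false_iff]
    · exact (hg01 ⟨c, h⟩ x).2
    · exact zero_le_one
  have hgNc : ∀ c, Continuous (gN c) := by
    intro c
    by_cases h : c < k <;> simp only [gN, h, dif_pos, dif_neg, not_false_iff]
    · exact (g ⟨c, h⟩).continuous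
    · exact continuous_const
  have hQ0 : ∀ b x, 0 ≤ Q b x :=
    fun b x => Finset.prod_nonneg fun c _ => by linarith [hgN1 c x]
  have hQ1 : ∀ b x, Q b x ≤ 1 :=
    fun b x => Finset.prod_le_one (fun c _ => by linarith [hgN1 c x])
      (fun c _ => by linarith [hgN0 c x])
  have hQc : ∀ b, Continuous (Q b) := by
    intro b
    apply continuous_finset_prod
    intro c _
    exact continuous_const.sub (hgNc c)
  have htel : ∀ (j : ℕ) (x : X), ∑ b ∈ Finset.range j, gN b x * Q b x = 1 - Q j x := by
    intro j x
    induction j with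
    | zero => simp [Q]
    | succ j ih =>
      rw [Finset.sum_range_succ, ih]
      have : Q (j + 1) x = Q j x * (1 - gN j x) := Finset.prod_range_succ _ j
      rw [this]
      ring
  obtain ⟨m, hm⟩ : ∃ m, k = m + 1 := ⟨k - 1, (Nat.succ_pred_eq_of_pos hk).symm⟩
  refine ⟨fun b x => if (b : ℕ) = m then Q m x else gN b x * Q b x, ?_, ?_, ?_, ?_, ?_⟩
  · intro b
    by_cases hb : (b : ℕ) = m <;> simp only [hb, if_pos, if_neg, not_false_iff, if_true]
    · exact hQc m
    · exact (hgNc b).mul (hQc b)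
  · intro b x
    by_cases hb : (b : ℕ) = m <;> simp only [hb, if_pos, if_neg, not_false_iff, if_true]
    · exact hQ0 m x
    · exact mul_nonneg (hgN0 b x) (hQ0 b x)
  · intro b x
    by_cases hb : (b : ℕ) = m <;> simp only [hb, if_pos, if_neg, not_false_iff, if_true]
    · exact hQ1 m x
    · exact mul_le_one₀ (hgN1 b x) (hQ0 b x) (hQ1 b x)
  · intro x
    rw [Fin.sum_univ_eq_sum_range (fun c => if c = m then Q m x else gN c x * Q c x) k, hm,
      Finset.sum_range_succ, if_pos rfl]
    have h1 : ∀ c ∈ Finset.range m, (if c = m then Q m x else gN c x * Q c x)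
        = gN c x * Q c x := by
      intro c hc
      rw [if_neg (Nat.ne_of_lt (Finset.mem_range.mp hc))]
    rw [Finset.sum_congr rfl h1, htel m x]
    ring
  · intro a b hab
    have hint : ∀ h : X → ℝ, Measurable h → (∀ x, 0 ≤ h x) → (∀ x, h x ≤ 1) →
        Integrable (fun x => chi (A a) x * h x) μ := by
      intro h hmeas h0 h1
      exact integrable_of_bdd ((chi_meas (hAm a)).mul hmeas) (C := 1) fun x => by
        rw [abs_of_nonneg (mul_nonneg (chi_nonneg _ x) (h0 x))]
        exact mul_le_one₀ (chi_le_one _ x) (h0 x) (h1 x)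
    by_cases hb : (b : ℕ) = m
    · -- the last function: bounded by 1 - g a
      have ham : (a : ℕ) < m := by
        have h1 : (a : ℕ) < k := a.isLt
        have h2 : (a : ℕ) ≠ (b : ℕ) := fun h => hab (Fin.val_injective h)
        omega
      have hptw : ∀ x, chi (A a) x * (if (b : ℕ) = m then Q m x else gN b x * Q b x)
          ≤ chi (A a \ F a) x := by
        intro x
        rw [if_pos hb]
        have hQle : Q m x ≤ 1 - gN (a : ℕ) x := by
          rw [show (Q m x) = (1 - gN (a : ℕ) x) *
              ∏ c ∈ (Finset.range m).erase (a : ℕ), (1 - gN c x) from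
            (Finset.mul_prod_erase _ _ (Finset.mem_range.mpr ham)).symm]
          refine mul_le_of_le_one_right (by linarith [hgN1 (a : ℕ) x]) ?_
          exact Finset.prod_le_one (fun c _ => by linarith [hgN1 c x])
            (fun c _ => by linarith [hgN0 c x])
        by_cases hxA : x ∈ A a
        · by_cases hxF : x ∈ F a
          · have hg1' : gN (a : ℕ) x = 1 := by
              simp only [gN, a.isLt, dif_pos, Fin.eta]
              exact hg1 a hxF
            have : chi (A a \ F a) x = 0 := by
              rw [chi_eq_ite, if_neg (fun h => h.2 hxF)]
            rw [this]
            calc chi (A a) x * Q m x ≤ 1 * Q m x :=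
                  mul_le_mul_of_nonneg_right (chi_le_one _ x) (hQ0 m x)
              _ = Q m x := one_mul _
              _ ≤ 0 := by rw [hg1'] at hQle; linarith
          · have : chi (A a \ F a) x = 1 := by
              rw [chi_eq_ite, if_pos ⟨hxA, hxF⟩]
            rw [this]
            calc chi (A a) x * Q m x ≤ 1 * 1 :=
                  mul_le_mul (chi_le_one _ x) (hQ1 m x) (hQ0 m x) zero_le_one
              _ = 1 := one_mul 1
        · have : chi (A a) x = 0 := by rw [chi_eq_ite, if_neg hxA]
          rw [this, zero_mul]
          exact chi_nonneg _ x
      calc ∫ x, chi (A a) x * (if (b : ℕ) = m then Q m x else gN b x * Q b x) ∂μ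
          ≤ ∫ x, chi (A a \ F a) x ∂μ := by
            refine integral_mono ?_ ?_ hptw
            · have h' := hint (fun x => Q m x) (hQc m).measurable
                (fun x => hQ0 m x) (fun x => hQ1 m x)
              have he : (fun x => chi (A a) x * (if (b : ℕ) = m then Q m x else gN b x * Q b x))
                  = fun x => chi (A a) x * Q m x := by
                funext x
                rw [if_pos hb]
              rw [he]
              exact h'
            · exact integrable_of_bdd (chi_meas ((hAm a).diff (hFc a).measurableSet))
                (C := 1) fun x => by
                  rw [abs_of_nonneg (chi_nonneg _ x)]
                  exact chi_le_one _ x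
        _ = (μ (A a \ F a)).toReal := by
            rw [show (fun x => chi (A a \ F a) x) = (A a \ F a).indicator (fun _ => (1:ℝ))
              from rfl, integral_indicator ((hAm a).diff (hFc a).measurableSet)]
            simp; rfl
        _ ≤ ε := hμ1 a
    · -- a generic function: bounded by the indicator of U b
      have hptw : ∀ x, chi (A a) x * (if (b : ℕ) = m then Q m x else gN b x * Q b x)
          ≤ chi (U b \ F b) x := by
        intro x
        rw [if_neg hb]
        by_cases hxU : x ∈ U b
        · by_cases hxA : x ∈ A a
          · have hxF : x ∉ F b := fun hxF =>
              Set.disjoint_left.mp (hAd a b hab) hxA (hFA b hxF)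
            have : chi (U b \ F b) x = 1 := by rw [chi_eq_ite, if_pos ⟨hxU, hxF⟩]
            rw [this]
            calc chi (A a) x * (gN b x * Q b x) ≤ 1 * (1 * 1) := by
                  refine mul_le_mul (chi_le_one _ x) ?_ ?_ zero_le_one
                  · exact mul_le_mul (hgN1 b x) (hQ1 b x) (hQ0 b x) zero_le_one
                  · exact mul_nonneg (hgN0 b x) (hQ0 b x)
              _ = 1 := by norm_num
          · have : chi (A a) x = 0 := by rw [chi_eq_ite, if_neg hxA]
            rw [this, zero_mul]
            exact chi_nonneg _ x
        · have hgz : gN (b : ℕ) x = 0 := by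
            simp only [gN, b.isLt, dif_pos, Fin.eta]
            exact hg0 b hxU
          rw [hgz, zero_mul, mul_zero]
          exact chi_nonneg _ x
      calc ∫ x, chi (A a) x * (if (b : ℕ) = m then Q m x else gN b x * Q b x) ∂μ
          ≤ ∫ x, chi (U b \ F b) x ∂μ := by
            refine integral_mono ?_ ?_ hptw
            · have h' := hint (fun x => gN b x * Q b x) ((hgNc b).mul (hQc b)).measurable
                (fun x => mul_nonneg (hgN0 b x) (hQ0 b x))
                (fun x => mul_le_one₀ (hgN1 b x) (hQ0 b x) (hQ1 b x))
              have he : (fun x => chi (A a) x * (if (b : ℕ) = m then Q m x else gN b x * Q b x))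
                  = fun x => chi (A a) x * (gN b x * Q b x) := by
                funext x
                rw [if_neg hb]
              rw [he]
              exact h'
            · exact integrable_of_bdd (chi_meas ((hUo b).measurableSet.diff
                (hFc b).measurableSet)) (C := 1) fun x => by
                  rw [abs_of_nonneg (chi_nonneg _ x)]
                  exact chi_le_one _ x
        _ = (μ (U b \ F b)).toReal := by
            rw [show (fun x => chi (U b \ F b) x) = (U b \ F b).indicator (fun _ => (1:ℝ))
              from rfl, integral_indicator ((hUo b).measurableSet.diff (hFc b).measurableSet)]
            simp; rfl
        _ ≤ ε := hμ2 b

end KSAux5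
section KSAux6

open Real MeasureTheory Filter

private lemma limsup_le_aux (f g : ℕ → ℝ) (c K : ℝ) (hc : 0 ≤ c) (hf0 : ∀ n, 0 ≤ f n)
    (hfg : ∀ n : ℕ, f n ≤ g n + (n : ℝ) * c) (hgK : ∀ n : ℕ, g n ≤ (n : ℝ) * K)
    (hgl : ∀ n : ℕ, -((n : ℝ) * c) ≤ g n) :
    Filter.atTop.limsup (fun n : ℕ => f n / (n : ℝ)) ≤
      Filter.atTop.limsup (fun n : ℕ => g n / (n : ℝ)) + c := by
  have hub : ∀ n : ℕ, f n / (n : ℝ) ≤ g n / (n : ℝ) + c := by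
    intro n
    rcases Nat.eq_zero_or_pos n with h | h
    · subst h
      simpa using hc
    · have hn : (0 : ℝ) < n := by exact_mod_cast h
      have h2 : f n / (n : ℝ) ≤ (g n + (n : ℝ) * c) / (n : ℝ) :=
        (div_le_div_iff_of_pos_right hn).mpr (hfg n)
      rwa [add_div, mul_comm, mul_div_assoc, div_self hn.ne', mul_one] at h2
  have hvlow : ∀ n : ℕ, -c ≤ g n / (n : ℝ) := by
    intro n
    rcases Nat.eq_zero_or_pos n with h | h
    · subst h
      simpa using hc
    · have hn : (0 : ℝ) < n := by exact_mod_cast h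
      have h2 : (-((n : ℝ) * c)) / (n : ℝ) ≤ g n / (n : ℝ) :=
        (div_le_div_iff_of_pos_right hn).mpr (hgl n)
      calc -c = (-((n : ℝ) * c)) / (n : ℝ) := by
            field_simp
        _ ≤ g n / (n : ℝ) := h2
  have hvup : ∀ n : ℕ, g n / (n : ℝ) ≤ max K 0 := by
    intro n
    rcases Nat.eq_zero_or_pos n with h | h
    · subst h
      simp [le_max_right]
    · have hn : (0 : ℝ) < n := by exact_mod_cast h
      calc g n / (n : ℝ) ≤ ((n : ℝ) * K) / (n : ℝ) := (div_le_div_iff_of_pos_right hn).mpr (hgK n)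
        _ = K := by field_simp
        _ ≤ max K 0 := le_max_left _ _
  have hu0 : Filter.IsCoboundedUnder (· ≤ ·) Filter.atTop (fun n : ℕ => f n / (n : ℝ)) := by
    refine Filter.IsBoundedUnder.isCoboundedUnder_le ⟨0, ?_⟩
    exact Filter.eventually_map.mpr (Filter.Eventually.of_forall fun n =>
      div_nonneg (hf0 n) (Nat.cast_nonneg n))
  have hvb : Filter.IsBoundedUnder (· ≤ ·) Filter.atTop (fun n : ℕ => g n / (n : ℝ)) :=
    ⟨max K 0, Filter.eventually_map.mpr (Filter.Eventually.of_forall hvup)⟩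
  have hvc : Filter.IsCoboundedUnder (· ≤ ·) Filter.atTop (fun n : ℕ => g n / (n : ℝ)) :=
    Filter.IsBoundedUnder.isCoboundedUnder_le
      ⟨-c, Filter.eventually_map.mpr (Filter.Eventually.of_forall hvlow)⟩
  have hvbc : Filter.IsBoundedUnder (· ≤ ·) Filter.atTop (fun n : ℕ => g n / (n : ℝ) + c) :=
    ⟨max K 0 + c, Filter.eventually_map.mpr (Filter.Eventually.of_forall fun n =>
      add_le_add_left (hvup n) c)⟩
  have h1 : Filter.atTop.limsup (fun n : ℕ => f n / (n : ℝ))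
      ≤ Filter.atTop.limsup (fun n : ℕ => g n / (n : ℝ) + c) :=
    Filter.limsup_le_limsup (Filter.Eventually.of_forall hub) hu0 hvbc
  have h2 : Filter.atTop.limsup (fun n : ℕ => g n / (n : ℝ) + c)
      = Filter.atTop.limsup (fun n : ℕ => g n / (n : ℝ)) + c :=
    limsup_add_const Filter.atTop (fun n : ℕ => g n / (n : ℝ)) c hvb hvc
  rw [← h2]
  exact h1

end KSAux6
/-- `h̃_μ(T) ≥ h_μ(T)`: the partition-of-unity metric entropy dominates
the Kolmogorov–Sinai entropy. -/
theorem ksEnt_le_metEnt {X : Type*} [MetricSpace X] [CompactSpace X] [Nonempty X]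
    [MeasurableSpace X] [BorelSpace X]
    (T : X → X) (hT : Continuous T) (hTsurj : Function.Surjective T)
    (μ : Measure X) [IsProbabilityMeasure μ] (hμ : MeasurePreserving T μ μ) :
    ksEnt T μ ≤ metEnt T μ := by
  classical
  have hTm : Measurable T := hT.measurable
  rw [ksEnt]
  refine iSup_le fun P => ?_
  have hk : 1 ≤ P.n := by
    rcases Nat.eq_zero_or_pos P.n with h | h
    · exfalso
      obtain ⟨x⟩ := (inferInstance : Nonempty X)
      have hx : x ∈ ⋃ i, P.A i := by
        rw [P.cover]
        exact Set.mem_univ _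
      obtain ⟨i, -⟩ := Set.mem_iUnion.mp hx
      have := i.isLt
      omega
    · exact h
  have hmet : ∀ (Φ : PartUnity X), Φ.Cont → ((locEnt T μ Φ : ℝ) : EReal) ≤ metEnt T μ :=
    fun Φ hΦ =>
      le_iSup (fun Ψ : {Ψ : PartUnity X // Ψ.Cont} => ((locEnt T μ Ψ.1 : ℝ) : EReal)) ⟨Φ, hΦ⟩
  have key : ∀ η : ℝ, 0 < η → ((ksLocEnt T μ P : ℝ) : EReal) ≤ metEnt T μ + (η : EReal) := by
    intro η hη
    -- choice of the approximation quality
    have hsel : ∃ ε : ℝ, 0 < ε ∧ ε ≤ Real.exp (-1)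
        ∧ ((P.n : ℝ) ^ 2) * (ε + Real.negMulLog ε) < η := by
      have hcont2 : Continuous (fun e : ℝ => ((P.n : ℝ) ^ 2) * (e + Real.negMulLog e)) :=
        continuous_const.mul (continuous_id.add Real.continuous_negMulLog)
      have hcont : Filter.Tendsto (fun e : ℝ => ((P.n : ℝ) ^ 2) * (e + Real.negMulLog e))
          (nhdsWithin 0 (Set.Ioi (0 : ℝ))) (nhds 0) := by
        have h0 : ((P.n : ℝ) ^ 2) * ((0 : ℝ) + Real.negMulLog 0) = 0 := by simp
        have := hcont2.tendsto 0
        rw [h0] at this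
        exact this.mono_left nhdsWithin_le_nhds
      have h1 : ∀ᶠ e in nhdsWithin 0 (Set.Ioi (0 : ℝ)),
          ((P.n : ℝ) ^ 2) * (e + Real.negMulLog e) < η := hcont.eventually_lt_const hη
      have h2 : ∀ᶠ e in nhdsWithin 0 (Set.Ioi (0 : ℝ)), e < Real.exp (-1) := by
        have : Filter.Tendsto (fun e : ℝ => e) (nhdsWithin 0 (Set.Ioi (0 : ℝ))) (nhds 0) :=
          tendsto_id.mono_left nhdsWithin_le_nhds
        exact this.eventually_lt_const (Real.exp_pos (-1))
      have h3 : ∀ᶠ e in nhdsWithin 0 (Set.Ioi (0 : ℝ)), (0 : ℝ) < e :=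
        eventually_mem_nhdsWithin
      obtain ⟨ε, ⟨hε1, hε2⟩, hε3⟩ := ((h1.and h2).and h3).exists
      exact ⟨ε, hε3, hε2.le, hε1⟩
    obtain ⟨ε, hε0, hεe, hεη⟩ := hsel
    obtain ⟨f, hfc, hf0, hf1, hfs, hfoff⟩ := exists_approx μ hk P.A P.meas P.disj hε0
    let Φ : PartUnity X := ⟨P.n, f, hf0, hf1, hfs⟩
    have hΦc : Φ.Cont := hfc
    have hΦm : ∀ b, Measurable (Φ.f b) := fun b => (hfc b).measurable
    have hδ0 : 0 ≤ pDelta μ Φ P.A := pDelta_nonneg μ Φ hΦm P.meas P.disj P.cover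
    have hδη : pDelta μ Φ P.A < η :=
      lt_of_le_of_lt (pDelta_le μ Φ hΦm P.meas P.disj P.cover hε0 hεe
        (fun a b hab => hfoff a b hab)) hεη
    have hKS : ∀ n : ℕ, 0 ≤ ∑ σ : Fin n → Fin P.n,
        Real.negMulLog (μ (⋂ i : Fin n, T^[(i : ℕ)] ⁻¹' P.A (σ i))).toReal := by
      intro n
      refine Finset.sum_nonneg fun σ _ => Real.negMulLog_nonneg ENNReal.toReal_nonneg ?_
      exact ENNReal.toReal_le_of_le_ofReal zero_le_one (by simpa using prob_le_one)
    have hkey : ∀ n : ℕ, (∑ σ : Fin n → Fin P.n,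
        Real.negMulLog (μ (⋂ i : Fin n, T^[(i : ℕ)] ⁻¹' P.A (σ i))).toReal)
        ≤ statEnt μ (PartUnity.dyn T Φ n) + (n : ℝ) * pDelta μ Φ P.A :=
      fun n => key_ineq hTm hμ Φ hΦm P.A P.meas P.disj P.cover n
    have hup : ∀ n : ℕ, statEnt μ (PartUnity.dyn T Φ n) ≤ (n : ℝ) * Real.log P.n :=
      fun n => statEnt_dyn_le hTm μ Φ hΦm hk n
    have hlow : ∀ n : ℕ, -((n : ℝ) * pDelta μ Φ P.A) ≤ statEnt μ (PartUnity.dyn T Φ n) :=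
      fun n => by linarith [hKS n, hkey n]
    have hls : ksLocEnt T μ P ≤ locEnt T μ Φ + pDelta μ Φ P.A :=
      limsup_le_aux
        (fun n => ∑ σ : Fin n → Fin P.n,
          Real.negMulLog (μ (⋂ i : Fin n, T^[(i : ℕ)] ⁻¹' P.A (σ i))).toReal)
        (fun n => statEnt μ (PartUnity.dyn T Φ n)) (pDelta μ Φ P.A) (Real.log P.n)
        hδ0 hKS hkey hup hlow
    calc ((ksLocEnt T μ P : ℝ) : EReal)
        ≤ ((locEnt T μ Φ + pDelta μ Φ P.A : ℝ) : EReal) := EReal.coe_le_coe_iff.mpr hls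
      _ = ((locEnt T μ Φ : ℝ) : EReal) + ((pDelta μ Φ P.A : ℝ) : EReal) := by
          rw [EReal.coe_add]
      _ ≤ metEnt T μ + (η : EReal) :=
          add_le_add (hmet Φ hΦc) (EReal.coe_le_coe_iff.mpr hδη.le)
  rcases eq_or_ne (metEnt T μ) ⊤ with htop | htop
  · rw [htop]
    exact le_top
  · have hbot : metEnt T μ ≠ ⊥ := by
      intro hb
      have h0 := hmet (PartUnity.triv X) (fun i => continuous_const)
      rw [hb, le_bot_iff] at h0
      exact EReal.coe_ne_bot _ h0
    have hco : ((metEnt T μ).toReal : EReal) = metEnt T μ := EReal.coe_toReal htop hbot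
    rw [← hco, EReal.coe_le_coe_iff]
    refine le_of_forall_pos_le_add fun η hη => ?_
    have h := key η hη
    rw [← hco, ← EReal.coe_add] at h
    exact EReal.coe_le_coe_iff.mp h
end

section
/- For any continuous surjective self-map T of a compact metric space X, h̃_top(T) ≤ h_top(T): for every continuous partition of unity Φ on X, h̃(T,Φ) is at most the classical topological entropy of T defined via open covers. -/
open MeasureTheory Filter Set

/-! ### Metric entropy via partitions of unity -/

variable {X Y : Type*}

/-! ### Auxiliary lemmas for Statement 5 -/

section Aux5

private lemma bsup_le' {Z : Type*} {S : Set Z} {f : Z → ℝ} {a : ℝ} (ha : 0 ≤ a)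
    (h : ∀ x ∈ S, f x ≤ a) : (⨆ x ∈ S, f x) ≤ a :=
  Real.iSup_le (fun x => Real.iSup_le (fun hx => h x hx) ha) ha

private lemma bsup_nonneg' {Z : Type*} {S : Set Z} {f : Z → ℝ} (h : ∀ x, 0 ≤ f x) :
    0 ≤ ⨆ x ∈ S, f x :=
  Real.iSup_nonneg fun x => Real.iSup_nonneg fun _ => h x

private lemma le_bsup' {Z : Type*} {S : Set Z} {f : Z → ℝ} (hb : ∀ x, f x ≤ 1) {x : Z}
    (hx : x ∈ S) : f x ≤ ⨆ y ∈ S, f y := by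
  have h1 : f x ≤ ⨆ _ : x ∈ S, f x :=
    le_ciSup (f := fun _ : x ∈ S => f x) ⟨f x, by rintro y ⟨h, rfl⟩; exact le_rfl⟩ hx
  refine h1.trans (le_ciSup (f := fun y => ⨆ _ : y ∈ S, f y) ?_ x)
  exact ⟨1, by rintro r ⟨y, rfl⟩; exact Real.iSup_le (fun _ => hb y) zero_le_one⟩

private lemma dynSet_succ_mem' {X : Type*} (T : X → X) {m : ℕ} (U : Fin m → Set X) {n : ℕ}
    (σ : Fin (n + 1) → Fin m) {x : X} (hx : x ∈ dynSet T U (n + 1) σ) :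
    x ∈ U (σ 0) ∧ T x ∈ dynSet T U n (σ ∘ Fin.succ) := by
  rw [dynSet, Set.mem_iInter] at hx
  constructor
  · simpa using hx 0
  · rw [dynSet, Set.mem_iInter]
    intro i
    have h := hx i.succ
    simpa [Fin.val_succ, Function.iterate_succ_apply] using h

private lemma one_le_topStat' {X : Type*} [Nonempty X] (Φ : PartUnity X) : 1 ≤ topStat Φ := by
  obtain ⟨x0⟩ := (inferInstance : Nonempty X)
  have h : (1 : ℝ) = ∑ i, Φ.f i x0 := (Φ.sum_one x0).symm
  rw [topStat, h]
  exact Finset.sum_le_sum fun i _ =>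
    le_ciSup (f := fun x => Φ.f i x) ⟨1, by rintro r ⟨y, rfl⟩; exact Φ.le_one i y⟩ x0

private lemma sum_bsup_dyn_le' {X : Type*} [Nonempty X] (T : X → X) (Φ : PartUnity X)
    {m : ℕ} (U : Fin m → Set X) {ε : ℝ} (hε : 0 ≤ ε)
    (hU : ∀ j : Fin m, (∑ i, ⨆ x ∈ U j, Φ.f i x) ≤ 1 + ε) :
    ∀ (n : ℕ) (σ : Fin n → Fin m),
      (∑ i, ⨆ x ∈ dynSet T U n σ, (PartUnity.dyn T Φ n).f i x) ≤ (1 + ε) ^ n := by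
  intro n
  induction n with
  | zero =>
    intro σ
    simp only [PartUnity.dyn, PartUnity.triv, pow_zero]
    change ∑ i : Fin 1, (⨆ x ∈ dynSet T U 0 σ, (1 : ℝ)) ≤ 1
    rw [Fin.sum_univ_one]
    exact bsup_le' zero_le_one fun x _ => le_rfl
  | succ n ih =>
    intro σ
    set Ψ := PartUnity.dyn T Φ n with hΨ
    simp only [PartUnity.dyn, PartUnity.join, PartUnity.comp, ← hΨ]
    have key : ∀ k : Fin (Φ.n * Ψ.n),
        (⨆ x ∈ dynSet T U (n + 1) σ,
            Φ.f (finProdFinEquiv.symm k).1 x * Ψ.f (finProdFinEquiv.symm k).2 (T x))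
          ≤ (⨆ x ∈ U (σ 0), Φ.f (finProdFinEquiv.symm k).1 x)
            * (⨆ y ∈ dynSet T U n (σ ∘ Fin.succ), Ψ.f (finProdFinEquiv.symm k).2 y) := by
      intro k
      have hA : 0 ≤ ⨆ x ∈ U (σ 0), Φ.f (finProdFinEquiv.symm k).1 x :=
        bsup_nonneg' fun x => Φ.nonneg _ x
      have hB : 0 ≤ ⨆ y ∈ dynSet T U n (σ ∘ Fin.succ), Ψ.f (finProdFinEquiv.symm k).2 y :=
        bsup_nonneg' fun y => Ψ.nonneg _ y
      refine bsup_le' (mul_nonneg hA hB) ?_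
      intro x hx
      obtain ⟨hx0, hx1⟩ := dynSet_succ_mem' T U σ hx
      exact mul_le_mul (le_bsup' (fun y => Φ.le_one _ y) hx0)
        (le_bsup' (fun y => Ψ.le_one _ y) hx1) (Ψ.nonneg _ _) hA
    calc (∑ k : Fin (Φ.n * Ψ.n), ⨆ x ∈ dynSet T U (n + 1) σ,
            Φ.f (finProdFinEquiv.symm k).1 x * Ψ.f (finProdFinEquiv.symm k).2 (T x))
        ≤ ∑ k : Fin (Φ.n * Ψ.n), (⨆ x ∈ U (σ 0), Φ.f (finProdFinEquiv.symm k).1 x)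
            * (⨆ y ∈ dynSet T U n (σ ∘ Fin.succ), Ψ.f (finProdFinEquiv.symm k).2 y) :=
          Finset.sum_le_sum fun k _ => key k
      _ = (∑ a, ⨆ x ∈ U (σ 0), Φ.f a x)
            * (∑ b, ⨆ y ∈ dynSet T U n (σ ∘ Fin.succ), Ψ.f b y) := by
          rw [← Equiv.sum_comp (finProdFinEquiv : Fin Φ.n × Fin Ψ.n ≃ Fin (Φ.n * Ψ.n))
            (fun k => (⨆ x ∈ U (σ 0), Φ.f (finProdFinEquiv.symm k).1 x)
              * (⨆ y ∈ dynSet T U n (σ ∘ Fin.succ), Ψ.f (finProdFinEquiv.symm k).2 y))]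
          simp only [Equiv.symm_apply_apply]
          rw [Fintype.sum_prod_type]
          dsimp only
          rw [← Finset.sum_mul_sum]
      _ ≤ (1 + ε) * (1 + ε) ^ n :=
          mul_le_mul (hU (σ 0)) (ih _)
            (Finset.sum_nonneg fun b _ => bsup_nonneg' fun y => Ψ.nonneg _ y) (by linarith)
      _ = (1 + ε) ^ (n + 1) := (pow_succ' _ _).symm

private lemma topStat_dyn_le' {X : Type*} [TopologicalSpace X] [Nonempty X] (T : X → X)
    (Φ : PartUnity X) (C : FinOpenCover X) {ε : ℝ} (hε : 0 ≤ ε)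
    (hU : ∀ j, (∑ i, ⨆ x ∈ C.U j, Φ.f i x) ≤ 1 + ε) (n : ℕ) :
    topStat (PartUnity.dyn T Φ n)
        ≤ (coverNum (fun σ : Fin n → Fin C.n => dynSet T C.U n σ) Set.univ : ℝ) * (1 + ε) ^ n
      ∧ 1 ≤ coverNum (fun σ : Fin n → Fin C.n => dynSet T C.U n σ) Set.univ
      ∧ coverNum (fun σ : Fin n → Fin C.n => dynSet T C.U n σ) Set.univ ≤ C.n ^ n := by
  have hcov_all : Set.univ ⊆
      ⋃ σ ∈ (Finset.univ : Finset (Fin n → Fin C.n)), dynSet T C.U n σ := by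
    intro x _
    have hx : ∀ i : Fin n, ∃ j, T^[(i : ℕ)] x ∈ C.U j := by
      intro i
      have : T^[(i : ℕ)] x ∈ ⋃ j, C.U j := by rw [C.cov]; exact Set.mem_univ _
      exact Set.mem_iUnion.mp this
    choose σ hσ using hx
    refine Set.mem_iUnion₂.mpr ⟨σ, Finset.mem_univ σ, ?_⟩
    rw [dynSet, Set.mem_iInter]
    exact fun i => hσ i
  have hne : {k | ∃ t : Finset (Fin n → Fin C.n), t.card = k ∧
      Set.univ ⊆ ⋃ σ ∈ t, dynSet T C.U n σ}.Nonempty :=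
    ⟨_, Finset.univ, rfl, hcov_all⟩
  obtain ⟨t, htc, htcov⟩ := Nat.sInf_mem hne
  have hK : coverNum (fun σ : Fin n → Fin C.n => dynSet T C.U n σ) Set.univ = t.card := by
    rw [coverNum]; exact htc.symm ▸ rfl
  have hK1 : 1 ≤ coverNum (fun σ : Fin n → Fin C.n => dynSet T C.U n σ) Set.univ := by
    rw [hK]
    obtain ⟨σ0, hσ0, -⟩ := Set.mem_iUnion₂.mp (htcov (Set.mem_univ (Classical.arbitrary X)))
    exact Finset.card_pos.mpr ⟨σ0, hσ0⟩
  have hKB : coverNum (fun σ : Fin n → Fin C.n => dynSet T C.U n σ) Set.univ ≤ C.n ^ n := by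
    have hcard : (Finset.univ : Finset (Fin n → Fin C.n)).card = C.n ^ n := by
      simp [Finset.card_univ]
    exact Nat.sInf_le ⟨Finset.univ, hcard, hcov_all⟩
  refine ⟨?_, hK1, hKB⟩
  have hmain : topStat (PartUnity.dyn T Φ n) ≤ (t.card : ℝ) * (1 + ε) ^ n := by
    rw [topStat]
    have hstep : ∀ i, (⨆ x, (PartUnity.dyn T Φ n).f i x)
        ≤ ∑ σ ∈ t, ⨆ x ∈ dynSet T C.U n σ, (PartUnity.dyn T Φ n).f i x := by
      intro i
      refine Real.iSup_le (fun x => ?_)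
        (Finset.sum_nonneg fun σ _ => bsup_nonneg' fun y => (PartUnity.dyn T Φ n).nonneg _ y)
      obtain ⟨σ0, hσ0, hxσ⟩ := Set.mem_iUnion₂.mp (htcov (Set.mem_univ x))
      calc (PartUnity.dyn T Φ n).f i x
          ≤ ⨆ y ∈ dynSet T C.U n σ0, (PartUnity.dyn T Φ n).f i y :=
            le_bsup' (fun y => (PartUnity.dyn T Φ n).le_one _ y) hxσ
        _ ≤ ∑ σ ∈ t, ⨆ y ∈ dynSet T C.U n σ, (PartUnity.dyn T Φ n).f i y :=
            Finset.single_le_sum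
              (fun σ _ => bsup_nonneg' fun y => (PartUnity.dyn T Φ n).nonneg _ y) hσ0
    calc (∑ i, ⨆ x, (PartUnity.dyn T Φ n).f i x)
        ≤ ∑ i, ∑ σ ∈ t, ⨆ x ∈ dynSet T C.U n σ, (PartUnity.dyn T Φ n).f i x :=
          Finset.sum_le_sum fun i _ => hstep i
      _ = ∑ σ ∈ t, ∑ i, ⨆ x ∈ dynSet T C.U n σ, (PartUnity.dyn T Φ n).f i x :=
          Finset.sum_comm
      _ ≤ ∑ _σ ∈ t, (1 + ε) ^ n :=
          Finset.sum_le_sum fun σ _ => sum_bsup_dyn_le' T Φ C.U hε hU n σ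
      _ = (t.card : ℝ) * (1 + ε) ^ n := by rw [Finset.sum_const, nsmul_eq_mul]
  rw [hK]
  exact_mod_cast hmain

private lemma real_le_of_forall_pos_le_add {a b : ℝ} (h : ∀ η : ℝ, 0 < η → a ≤ b + η) :
    a ≤ b := by
  by_contra hc
  push_neg at hc
  have := h ((a - b) / 2) (by linarith)
  linarith

private lemma topLocEnt_le_covLocEnt_add' {X : Type*} [TopologicalSpace X] [Nonempty X]
    (T : X → X) (Φ : PartUnity X) (C : FinOpenCover X) {ε : ℝ} (hε : 0 ≤ ε)
    (hU : ∀ j, (∑ i, ⨆ x ∈ C.U j, Φ.f i x) ≤ 1 + ε) :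
    topLocEnt T Φ ≤ covLocEnt T C + Real.log (1 + ε) := by
  unfold topLocEnt covLocEnt
  set K : ℕ → ℕ := fun n => coverNum (fun σ : Fin n → Fin C.n => dynSet T C.U n σ) Set.univ
    with hKdef
  set u : ℕ → ℝ := fun n => Real.log (topStat (PartUnity.dyn T Φ n)) / (n : ℝ) with hudef
  set v : ℕ → ℝ := fun n => Real.log ((K n : ℕ) : ℝ) / (n : ℝ) with hvdef
  set c := Real.log (1 + ε) with hcdef
  have hc0 : 0 ≤ c := Real.log_nonneg (by linarith)
  have hu0 : ∀ n, 0 ≤ u n := fun n =>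
    div_nonneg (Real.log_nonneg (one_le_topStat' _)) (Nat.cast_nonneg n)
  have hK1 : ∀ n, 1 ≤ K n := fun n => (topStat_dyn_le' T Φ C hε hU n).2.1
  have hK1R : ∀ n, (1 : ℝ) ≤ (K n : ℝ) := fun n => by exact_mod_cast hK1 n
  have hv0 : ∀ n, 0 ≤ v n := fun n =>
    div_nonneg (Real.log_nonneg (hK1R n)) (Nat.cast_nonneg n)
  have hvB : ∀ n, v n ≤ max 0 (Real.log C.n) := by
    intro n
    rcases Nat.eq_zero_or_pos n with hn | hn
    · subst hn
      simp [hvdef]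
    · have hn0 : (0 : ℝ) < (n : ℝ) := by exact_mod_cast hn
      have hKB := (topStat_dyn_le' T Φ C hε hU n).2.2
      have h1 : Real.log ((K n : ℕ) : ℝ) ≤ (n : ℝ) * Real.log (C.n : ℝ) := by
        rw [← Real.log_pow]
        apply Real.log_le_log (by linarith [hK1R n])
        exact_mod_cast hKB
      have h2 : v n ≤ ((n : ℝ) * Real.log (C.n : ℝ)) / (n : ℝ) := by
        rw [hvdef]
        exact div_le_div_of_nonneg_right h1 hn0.le |>.trans_eq rfl
      rw [mul_div_cancel_left₀ _ (ne_of_gt hn0)] at h2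
      exact h2.trans (le_max_right _ _)
  have hle : ∀ᶠ n in Filter.atTop, u n ≤ v n + c := by
    filter_upwards [Filter.eventually_ge_atTop 1] with n hn
    have hn0 : (0 : ℝ) < (n : ℝ) := by exact_mod_cast hn
    obtain ⟨hmain, -, -⟩ := topStat_dyn_le' T Φ C hε hU n
    have hts : (1 : ℝ) ≤ topStat (PartUnity.dyn T Φ n) := one_le_topStat' _
    have hKne : ((K n : ℕ) : ℝ) ≠ 0 := by
      have := hK1R n; linarith
    have hpne : ((1 : ℝ) + ε) ^ n ≠ 0 := pow_ne_zero _ (by linarith)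
    have hlog : Real.log (topStat (PartUnity.dyn T Φ n))
        ≤ Real.log ((K n : ℕ) : ℝ) + (n : ℝ) * c := by
      have h := Real.log_le_log (by linarith) hmain
      rwa [Real.log_mul hKne hpne, Real.log_pow] at h
    have h3 : u n ≤ (Real.log ((K n : ℕ) : ℝ) + (n : ℝ) * c) / (n : ℝ) :=
      div_le_div_of_nonneg_right hlog hn0.le |>.trans_eq rfl
    rwa [add_div, mul_div_cancel_left₀ _ (ne_of_gt hn0)] at h3
  have hub : Filter.atTop.IsBoundedUnder (· ≥ ·) u := Filter.isBoundedUnder_of ⟨0, hu0⟩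
  have hvbdd : Filter.atTop.IsBoundedUnder (· ≤ ·) v :=
    Filter.isBoundedUnder_of ⟨max 0 (Real.log C.n), hvB⟩
  have hvcb : Filter.atTop.IsCoboundedUnder (· ≤ ·) v :=
    Filter.IsBoundedUnder.isCoboundedUnder_le (Filter.isBoundedUnder_of ⟨0, hv0⟩)
  have hbdd2 : Filter.atTop.IsBoundedUnder (· ≤ ·) (fun n => v n + c) :=
    Filter.isBoundedUnder_of ⟨max 0 (Real.log C.n) + c, fun n => add_le_add_left (hvB n) c⟩
  calc Filter.atTop.limsup u
      ≤ Filter.atTop.limsup (fun n => v n + c) :=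
        Filter.limsup_le_limsup hle (Filter.IsBoundedUnder.isCoboundedUnder_le hub) hbdd2
    _ = Filter.atTop.limsup v + c := limsup_add_const Filter.atTop v c hvbdd hvcb
    _ = _ + c := rfl

end Aux5


/-- `h̃_top(T) ≤ h_top(T)`: for every continuous partition of unity `Φ`,
`h̃(T,Φ)` is at most the classical topological entropy via open covers. -/
theorem topEnt_le_topEntCov {X : Type*} [MetricSpace X] [CompactSpace X] [Nonempty X]
    [MeasurableSpace X] [BorelSpace X]
    (T : X → X) (hT : Continuous T) (hTsurj : Function.Surjective T) :
    (∀ Φ : PartUnity X, Φ.Cont → ((topLocEnt T Φ : ℝ) : EReal) ≤ topEntCov T) ∧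
    topEnt T ≤ topEntCov T := by
  have part1 : ∀ Φ : PartUnity X, Φ.Cont → ((topLocEnt T Φ : ℝ) : EReal) ≤ topEntCov T := by
    intro Φ hΦ
    have hN : 0 < Φ.n := by
      rcases Nat.eq_zero_or_pos Φ.n with h | h
      · exfalso
        haveI : IsEmpty (Fin Φ.n) := by rw [h]; infer_instance
        have hs := Φ.sum_one (Classical.arbitrary X)
        simp at hs
      · exact h
    have key : ∀ η : ℝ, 0 < η → ((topLocEnt T Φ : ℝ) : EReal) ≤ topEntCov T + ((η : ℝ) : EReal) := by
      intro η hη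
      set ε := Real.exp η - 1 with hεdef
      have hε : 0 < ε := by
        have h1 : 1 < Real.exp η := Real.one_lt_exp_iff.mpr hη
        rw [hεdef]; linarith
      have hlog1 : Real.log (1 + ε) = η := by
        rw [hεdef, show (1 : ℝ) + (Real.exp η - 1) = Real.exp η by ring, Real.log_exp]
      have hNR : ((Φ.n : ℕ) : ℝ) ≠ 0 := Nat.cast_ne_zero.mpr hN.ne'
      have hεN : 0 < ε / (Φ.n : ℝ) := div_pos hε (by exact_mod_cast hN)
      have hcont : ∀ i : Fin Φ.n, ∃ d > 0, ∀ x y : X, dist x y < d →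
          dist (Φ.f i x) (Φ.f i y) < ε / (Φ.n : ℝ) := by
        intro i
        have huc : UniformContinuous (Φ.f i) :=
          CompactSpace.uniformContinuous_of_continuous (hΦ i)
        obtain ⟨d, hd, hdd⟩ := Metric.uniformContinuous_iff.mp huc _ hεN
        exact ⟨d, hd, fun x y h => hdd h⟩
      choose d hd hdd using hcont
      haveI : Nonempty (Fin Φ.n) := ⟨⟨0, hN⟩⟩
      set δ := Finset.univ.inf' Finset.univ_nonempty d with hδdef
      have hδ : 0 < δ := by
        rw [hδdef, Finset.lt_inf'_iff]
        exact fun i _ => hd i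
      have hδle : ∀ i, δ ≤ d i := fun i => Finset.inf'_le d (Finset.mem_univ i)
      obtain ⟨s, hs⟩ := isCompact_univ.elim_finite_subcover
        (fun x : X => Metric.ball x (δ / 3)) (fun x => Metric.isOpen_ball)
        (fun x _ => Set.mem_iUnion.mpr ⟨x, Metric.mem_ball_self (by linarith)⟩)
      set C : FinOpenCover X :=
        { n := s.card
          U := fun i => Metric.ball ((s.equivFin.symm i : X)) (δ / 3)
          opn := fun i => Metric.isOpen_ball
          cov := by
            apply Set.eq_univ_of_univ_subset
            intro x hx
            obtain ⟨cpt, hcpt, hxc⟩ := Set.mem_iUnion₂.mp (hs hx)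
            exact Set.mem_iUnion.mpr ⟨s.equivFin ⟨cpt, hcpt⟩, by simpa using hxc⟩ } with hCdef
      have hU : ∀ j, (∑ i, ⨆ x ∈ C.U j, Φ.f i x) ≤ 1 + ε := by
        intro j
        set cj : X := (s.equivFin.symm j : X) with hcj
        have hsup : ∀ i, (⨆ x ∈ C.U j, Φ.f i x) ≤ Φ.f i cj + ε / (Φ.n : ℝ) := by
          intro i
          refine bsup_le' (add_nonneg (Φ.nonneg i cj) hεN.le) ?_
          intro x hx
          have hxc : dist x cj < δ / 3 := by
            exact Metric.mem_ball.mp (hx : x ∈ Metric.ball cj (δ / 3))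
          have hlt : dist x cj < d i := lt_of_lt_of_le (by linarith) (hδle i)
          have h2 := hdd i x cj hlt
          rw [Real.dist_eq] at h2
          have h3 := (abs_lt.mp h2).2
          linarith
        calc (∑ i, ⨆ x ∈ C.U j, Φ.f i x) ≤ ∑ i, (Φ.f i cj + ε / (Φ.n : ℝ)) :=
            Finset.sum_le_sum fun i _ => hsup i
          _ = 1 + ε := by
            rw [Finset.sum_add_distrib, Φ.sum_one cj, Finset.sum_const, Finset.card_univ,
              Fintype.card_fin, nsmul_eq_mul, mul_div_cancel₀ _ hNR]
      have hreal : topLocEnt T Φ ≤ covLocEnt T C + η := by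
        have h := topLocEnt_le_covLocEnt_add' T Φ C hε.le hU
        rwa [hlog1] at h
      calc ((topLocEnt T Φ : ℝ) : EReal)
          ≤ ((covLocEnt T C + η : ℝ) : EReal) := EReal.coe_le_coe_iff.mpr hreal
        _ = ((covLocEnt T C : ℝ) : EReal) + ((η : ℝ) : EReal) := EReal.coe_add _ _
        _ ≤ topEntCov T + ((η : ℝ) : EReal) := by
            apply add_le_add_left
            exact le_iSup (fun C : FinOpenCover X => ((covLocEnt T C : ℝ) : EReal)) C
    by_cases htop : topEntCov T = ⊤
    · rw [htop]; exact le_top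
    · have hbot : topEntCov T ≠ ⊥ := by
        intro hb
        have h1 := key 1 one_pos
        rw [hb, EReal.bot_add] at h1
        exact EReal.coe_ne_bot _ (le_bot_iff.mp h1)
      obtain ⟨b, hb⟩ := EReal.canLift.prf (topEntCov T) ⟨htop, hbot⟩
      rw [← hb, EReal.coe_le_coe_iff]
      apply real_le_of_forall_pos_le_add
      intro η hη
      have h := key η hη
      rw [← hb, ← EReal.coe_add, EReal.coe_le_coe_iff] at h
      exact h
  exact ⟨part1, iSup_le fun Φ => part1 Φ.1 Φ.2⟩
end
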